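/- arXiv:0711.0094 — 4 statements merged into one kernel-verified Lean document; each statement's English description precedes it below -/
import Mathlib

section
/- For every g ≥ 1, every τ in the Siegel upper half-space H_g, and every z ∈ ℂ^g, the family (exp(πi(nᵀτn + 2nᵀz)))_{n ∈ ℤ^g} is absolutely summable; in particular the Riemann theta function θ(τ,z) := ∑_{n∈ℤ^g} exp(πi(nᵀτn + 2nᵀz)) is a well-defined complex number. -/
open scoped Matrix
open Matrix

open Real in
private lemma theta_aux_summable_pi_prod :
    ∀ (g : ℕ) (f : Fin g → ℤ → ℝ), (∀ i m, 0 ≤ f i m) →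
    (∀ i, Summable (f i)) → Summable (fun n : Fin g → ℤ => ∏ i, f i (n i)) := by
  intro g
  induction g with
  | zero => intro f _ _; exact Summable.of_finite
  | succ g ih =>
    intro f hnn hs
    set F : ℤ → ℝ := f 0 with hF
    set G : (Fin g → ℤ) → ℝ := fun v => ∏ i : Fin g, f i.succ (v i) with hG
    have hsG : Summable G := ih (fun i => f i.succ) (fun i m => hnn _ _) fun i => hs _
    have h2 : Summable (fun p : ℤ × (Fin g → ℤ) => F p.1 * G p.2) :=
      Summable.mul_of_nonneg (hs 0) hsG (fun m => hnn _ _)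
        (fun v => Finset.prod_nonneg fun i _ => hnn _ _)
    rw [← ((Fin.consEquiv fun _ : Fin (g+1) => ℤ)).summable_iff]
    refine h2.congr fun p => ?_
    simp [hF, hG, Fin.prod_univ_succ, Fin.consEquiv]

private lemma theta_aux_posdef_lower_bound {g : ℕ} {Y : Matrix (Fin g) (Fin g) ℝ}
    (hY : Y.PosDef) :
    ∃ c > (0:ℝ), ∀ x : Fin g → ℝ, c * (∑ i, x i ^ 2) ≤ x ⬝ᵥ Y *ᵥ x := by
  rcases isEmpty_or_nonempty (Fin g) with h | h
  · exact ⟨1, one_pos, fun x => by simp [dotProduct]⟩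
  · set φ : EuclideanSpace ℝ (Fin g) → ℝ := fun x => (x : Fin g → ℝ) ⬝ᵥ Y *ᵥ (x : Fin g → ℝ)
      with hφ
    have hcont : Continuous φ := by
      unfold φ
      simp only [dotProduct, mulVec]
      fun_prop
    have hS : IsCompact (Metric.sphere (0 : EuclideanSpace ℝ (Fin g)) 1) :=
      isCompact_sphere _ _
    have hSne : (Metric.sphere (0 : EuclideanSpace ℝ (Fin g)) 1).Nonempty :=
      NormedSpace.sphere_nonempty.mpr zero_le_one
    obtain ⟨x₀, hx₀S, hx₀min⟩ := hS.exists_isMinOn hSne hcont.continuousOn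
    have hx₀ne : x₀ ≠ 0 := by
      intro h0
      have : ‖x₀‖ = 1 := by simpa using hx₀S
      rw [h0] at this
      simp at this
    refine ⟨φ x₀, ?_, fun x => ?_⟩
    · have h2 := hY.dotProduct_mulVec_pos (x := (x₀ : Fin g → ℝ))
        (by intro h0; exact hx₀ne (by ext i; exact congrFun h0 i))
      simpa [hφ, star_trivial] using h2
    · rcases eq_or_ne x 0 with rfl | hx
      · simp [dotProduct]
      · set xe : EuclideanSpace ℝ (Fin g) := WithLp.toLp 2 x with hxe
        have hnorm : ‖xe‖ ≠ 0 := norm_ne_zero_iff.mpr (fun h0 => hx (by simpa [hxe] using congrArg WithLp.ofLp h0))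
        have hmem : (‖xe‖⁻¹ • xe) ∈ Metric.sphere (0 : EuclideanSpace ℝ (Fin g)) 1 := by
          simp [norm_smul, abs_inv, inv_mul_cancel₀ hnorm]
        have hx₀le : φ x₀ ≤ φ (‖xe‖⁻¹ • xe) := hx₀min hmem
        have hval : φ (‖xe‖⁻¹ • xe) = ‖xe‖⁻¹ * ‖xe‖⁻¹ * φ xe := by
          simp only [hφ]
          rw [show ((‖xe‖⁻¹ • xe : EuclideanSpace ℝ (Fin g)) : Fin g → ℝ)
              = ‖xe‖⁻¹ • (xe : Fin g → ℝ) from rfl]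
          rw [smul_dotProduct, mulVec_smul, dotProduct_smul]
          simp [mul_assoc]
        have hsq : ∑ i, x i ^ 2 = ‖xe‖ ^ 2 := by
          rw [EuclideanSpace.norm_eq, Real.sq_sqrt (by positivity)]
          simp [sq_abs, hxe]
        rw [hsq]
        have h2 : φ x₀ * ‖xe‖ ^ 2 ≤ φ xe := by
          rw [hval] at hx₀le
          have := mul_le_mul_of_nonneg_right hx₀le (by positivity : (0:ℝ) ≤ ‖xe‖ ^ 2)
          calc φ x₀ * ‖xe‖ ^ 2 ≤ ‖xe‖⁻¹ * ‖xe‖⁻¹ * φ xe * ‖xe‖ ^ 2 := this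
            _ = φ xe := by field_simp [sq]
        exact h2

/-- The general term of the Riemann theta series:
`exp(πi(nᵀτn + 2nᵀz))` for an integer vector `n`. -/
noncomputable def thetaTerm (g : ℕ) (τ : Matrix (Fin g) (Fin g) ℂ) (z : Fin g → ℂ)
    (n : Fin g → ℤ) : ℂ :=
  Complex.exp ((Real.pi : ℂ) * Complex.I *
    ((fun i => (n i : ℂ)) ⬝ᵥ τ.mulVec (fun i => (n i : ℂ)) +
      2 * ((fun i => (n i : ℂ)) ⬝ᵥ z)))

open Real in
private lemma theta_aux_norm (g : ℕ) (τ : Matrix (Fin g) (Fin g) ℂ) (z : Fin g → ℂ)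
    (n : Fin g → ℤ) :
    ‖thetaTerm g τ z n‖ = rexp (-(π *
      ((fun i => (n i : ℝ)) ⬝ᵥ (Matrix.of fun i j => (τ i j).im).mulVec (fun i => (n i : ℝ))
        + 2 * ∑ i, (n i : ℝ) * (z i).im))) := by
  rw [thetaTerm, Complex.norm_exp]
  congr 1
  simp only [Complex.mul_re, Complex.mul_im, Complex.I_re, Complex.I_im, Complex.ofReal_re,
    Complex.ofReal_im, Complex.add_im, Complex.add_re, dotProduct, mulVec,
    Complex.im_sum, Complex.re_sum, Matrix.of_apply]
  push_cast
  simp [Complex.mul_im, Complex.im_sum, Finset.mul_sum, mul_comm]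

open Real in
/-- For `τ` in the Siegel upper half-space (symmetric with positive definite imaginary
part) and any `z ∈ ℂ^g`, the theta series is absolutely summable; in particular the
Riemann theta function `θ(τ,z) = ∑_{n ∈ ℤ^g} exp(πi(nᵀτn + 2nᵀz))` is well defined. -/
theorem theta_series_abs_summable (g : ℕ) (hg : 1 ≤ g)
    (τ : Matrix (Fin g) (Fin g) ℂ) (hsym : τ.IsSymm)
    (hpos : (Matrix.of fun i j => (τ i j).im).PosDef)
    (z : Fin g → ℂ) :
    Summable (fun n : Fin g → ℤ => ‖thetaTerm g τ z n‖) ∧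
      Summable (fun n : Fin g → ℤ => thetaTerm g τ z n) := by
  obtain ⟨c, hc, hY⟩ := theta_aux_posdef_lower_bound hpos
  set f : Fin g → ℤ → ℝ :=
    fun i m => rexp (-π * (c * (m:ℝ)^2 - 2 * |(z i).im| * |(m:ℝ)|)) with hf
  have hfs : ∀ i, Summable (f i) := by
    intro i
    have := summable_pow_mul_jacobiTheta₂_term_bound |(z i).im| hc 0
    refine this.congr fun m => ?_
    push_cast
    simp [hf]
  have hB : Summable (fun n : Fin g → ℤ => ∏ i, f i (n i)) :=
    theta_aux_summable_pi_prod g f (fun i m => (Real.exp_pos _).le) hfs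
  have hle : ∀ n : Fin g → ℤ, ‖thetaTerm g τ z n‖ ≤ ∏ i, f i (n i) := by
    intro n
    rw [theta_aux_norm, hf]
    simp only
    rw [← Real.exp_sum, Real.exp_le_exp]
    have key : c * (∑ i, ((n i : ℝ))^2) - 2 * ∑ i, |(z i).im| * |(n i : ℝ)|
        ≤ (fun i => (n i : ℝ)) ⬝ᵥ (Matrix.of fun i j => (τ i j).im).mulVec (fun i => (n i : ℝ))
          + 2 * ∑ i, (n i : ℝ) * (z i).im := by
      have h1 := hY (fun i => (n i : ℝ))
      have h2 : -∑ i, |(z i).im| * |(n i : ℝ)| ≤ ∑ i, (n i : ℝ) * (z i).im := by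
        rw [← Finset.sum_neg_distrib]
        refine Finset.sum_le_sum fun i _ => ?_
        calc -(|(z i).im| * |(n i : ℝ)|) = -|(n i : ℝ) * (z i).im| := by
              rw [abs_mul]; ring
          _ ≤ (n i : ℝ) * (z i).im := neg_abs_le _
      nlinarith [h1, h2]
    have hsum : ∑ i, -π * (c * ((n i : ℝ))^2 - 2 * |(z i).im| * |(n i : ℝ)|)
        = -π * (c * (∑ i, ((n i : ℝ))^2) - 2 * ∑ i, |(z i).im| * |(n i : ℝ)|) := by
      have e1 : ∀ i : Fin g, -π * (c * ((n i : ℝ))^2 - 2 * |(z i).im| * |(n i : ℝ)|)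
          = -π * c * ((n i : ℝ))^2 + 2 * π * (|(z i).im| * |(n i : ℝ)|) := fun i => by ring
      simp only [e1, Finset.sum_add_distrib, ← Finset.mul_sum]
      ring
    rw [hsum]
    nlinarith [key, Real.pi_pos]
  have h1 : Summable (fun n : Fin g → ℤ => ‖thetaTerm g τ z n‖) :=
    Summable.of_nonneg_of_le (fun _ => norm_nonneg _) hle hB
  exact ⟨h1, h1.of_norm⟩
end

section
/- For every τ ∈ H_g, the stabilizer of τ under the action of the integral symplectic group, i.e. the set {γ = (A B; C D) ∈ Sp(2g,ℤ) : (Aτ+B)(Cτ+D)⁻¹ = τ}, is a finite set. -/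
open scoped Matrix
open Matrix

/-- The standard symplectic form `J = (0 1; −1 0)` in `g × g` blocks, over `ℤ`. -/
def JmatZ (g : ℕ) : Matrix (Fin g ⊕ Fin g) (Fin g ⊕ Fin g) ℤ :=
  Matrix.fromBlocks 0 1 (-1) 0

/-- The action `γ∘τ = (Aτ+B)(Cτ+D)⁻¹` of an integral `2g × 2g` matrix `γ`
(written in `g × g` blocks `γ = (A B; C D)`) on a `g × g` complex matrix `τ`. -/
noncomputable def sympActZ (g : ℕ) (γ : Matrix (Fin g ⊕ Fin g) (Fin g ⊕ Fin g) ℤ)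
    (τ : Matrix (Fin g) (Fin g) ℂ) : Matrix (Fin g) (Fin g) ℂ :=
  (γ.toBlocks₁₁.map (fun x : ℤ => (x : ℂ)) * τ + γ.toBlocks₁₂.map (fun x : ℤ => (x : ℂ))) *
    (γ.toBlocks₂₁.map (fun x : ℤ => (x : ℂ)) * τ + γ.toBlocks₂₂.map (fun x : ℤ => (x : ℂ)))⁻¹

/-! ### Auxiliary lemmas -/

lemma finite_of_bdd {I J : Type*} [Fintype I] [Fintype J] (N : ℤ)
    (s : Set (Matrix I J ℤ)) (h : ∀ γ ∈ s, ∀ i j, |γ i j| ≤ N) : s.Finite := by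
  have hsub : s ⊆ (Set.pi Set.univ fun _ : I => Set.pi Set.univ fun _ : J => Set.Icc (-N) N) := by
    intro γ hγ
    intro i _
    intro j _
    exact Set.mem_Icc.mpr (abs_le.mp (h γ hγ i j))
  exact Set.Finite.subset
    (Set.Finite.pi fun _ => Set.Finite.pi fun _ => Set.finite_Icc _ _) hsub

lemma dot_symm {n : Type*} [Fintype n] (Y : Matrix n n ℝ) (hY : Yᵀ = Y)
    (u v : n → ℝ) : u ⬝ᵥ Y *ᵥ v = v ⬝ᵥ Y *ᵥ u := by
  simp only [dotProduct, Matrix.mulVec, Finset.mul_sum]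
  rw [Finset.sum_comm]
  refine Finset.sum_congr rfl fun i _ => Finset.sum_congr rfl fun j _ => ?_
  have h2 : Y j i = Y i j := by conv_lhs => rw [← hY, Matrix.transpose_apply]
  rw [h2]; ring

lemma cs_ineq {n : Type*} [Fintype n] (Y : Matrix n n ℝ) (hY : Y.PosSemidef)
    (x p : n → ℝ) :
    (x ⬝ᵥ Y *ᵥ p) ^ 2 ≤ (x ⬝ᵥ Y *ᵥ x) * (p ⬝ᵥ Y *ᵥ p) := by
  have hYs : Yᵀ = Y := hY.1
  have key : ∀ t : ℝ, 0 ≤ (x ⬝ᵥ Y *ᵥ x) * (t * t) + (2 * (x ⬝ᵥ Y *ᵥ p)) * t + p ⬝ᵥ Y *ᵥ p := by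
    intro t
    have h0 := hY.dotProduct_mulVec_nonneg (p + t • x)
    rw [star_trivial] at h0
    have expand : (p + t • x) ⬝ᵥ Y *ᵥ (p + t • x)
        = (x ⬝ᵥ Y *ᵥ x) * (t * t) + (2 * (x ⬝ᵥ Y *ᵥ p)) * t + p ⬝ᵥ Y *ᵥ p := by
      simp only [Matrix.mulVec_add, Matrix.mulVec_smul, dotProduct_add,
        add_dotProduct, dotProduct_smul, smul_dotProduct, smul_eq_mul]
      rw [dot_symm Y hYs p x]
      ring
    rw [expand] at h0
    exact h0
  have hd := discrim_le_zero key
  rw [discrim] at hd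
  nlinarith [hd]

lemma entry_sq_le {n : Type*} [Fintype n] [DecidableEq n] (Y : Matrix n n ℝ)
    (hY : Y.PosDef) (p : n → ℝ) (i : n) :
    p i ^ 2 ≤ Y⁻¹ i i * (p ⬝ᵥ Y *ᵥ p) := by
  have hYs : Yᵀ = Y := hY.1
  set x : n → ℝ := fun k => Y⁻¹ k i with hx
  have h1 : Y *ᵥ x = fun l => (1 : Matrix n n ℝ) l i := by
    funext l
    have : (Y *ᵥ x) l = (Y * Y⁻¹) l i := by
      simp [Matrix.mulVec, Matrix.mul_apply, dotProduct, hx]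
    rw [this, Matrix.mul_nonsing_inv _ hY.det_pos.ne'.isUnit]
  have h2 : x ⬝ᵥ Y *ᵥ p = p i := by
    rw [dot_symm Y hYs x p, h1]
    simp [dotProduct, Matrix.one_apply]
  have h3 : x ⬝ᵥ Y *ᵥ x = Y⁻¹ i i := by
    rw [h1]
    simp [dotProduct, Matrix.one_apply, hx]
  have hcs := cs_ineq Y hY.posSemidef x p
  rw [h2, h3] at hcs
  exact hcs

noncomputable abbrev icm {g : ℕ} (Z : Matrix (Fin g) (Fin g) ℤ) : Matrix (Fin g) (Fin g) ℂ :=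
  Z.map (fun x : ℤ => (x : ℂ))

lemma Jsq (g : ℕ) : JmatZ g * JmatZ g = -1 := by
  have h1 : (-1 : Matrix (Fin g ⊕ Fin g) (Fin g ⊕ Fin g) ℤ) = Matrix.fromBlocks (-1) 0 0 (-1) := by
    rw [← Matrix.fromBlocks_one, Matrix.fromBlocks_neg]
    simp
  rw [h1]
  simp [JmatZ, Matrix.fromBlocks_multiply]

lemma symp_transpose {g : ℕ} (γ : Matrix (Fin g ⊕ Fin g) (Fin g ⊕ Fin g) ℤ)
    (h : γ * JmatZ g * γᵀ = JmatZ g) : γᵀ * JmatZ g * γ = JmatZ g := by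
  have hJ2 := Jsq g
  have h2 : (-JmatZ g) * JmatZ g = 1 := by rw [neg_mul, hJ2]; simp
  have hR : γ * (JmatZ g * γᵀ * (-JmatZ g)) = 1 := by
    have e : γ * (JmatZ g * γᵀ * (-JmatZ g)) = (γ * JmatZ g * γᵀ) * (-JmatZ g) := by
      noncomm_ring
    rw [e, h, mul_neg, hJ2]
    simp
  have hL : (JmatZ g * γᵀ * (-JmatZ g)) * γ = 1 := mul_eq_one_comm.mp hR
  have key : ((-JmatZ g) * JmatZ g) * (γᵀ * (-JmatZ g) * γ)
      = (-JmatZ g) * ((JmatZ g * γᵀ * (-JmatZ g)) * γ) := by noncomm_ring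
  have e1 : γᵀ * (-JmatZ g) * γ = -JmatZ g := by
    rw [← one_mul (γᵀ * (-JmatZ g) * γ), ← h2, key, hL, mul_one]
  have e2 : γᵀ * (-JmatZ g) * γ = -(γᵀ * JmatZ g * γ) := by noncomm_ring
  rw [e2] at e1
  exact neg_injective e1

lemma Jmap (g : ℕ) : (JmatZ g).map (fun x : ℤ => (x : ℂ)) = Matrix.fromBlocks 0 1 (-1) 0 := by
  have m0 : (0 : Matrix (Fin g) (Fin g) ℤ).map (fun x : ℤ => (x : ℂ)) = 0 := by
    ext i j; simp
  have m1 : (1 : Matrix (Fin g) (Fin g) ℤ).map (fun x : ℤ => (x : ℂ)) = 1 := by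
    ext i j; simp [Matrix.one_apply, apply_ite (fun x : ℤ => (x : ℂ))]
  have mn : ((-1) : Matrix (Fin g) (Fin g) ℤ).map (fun x : ℤ => (x : ℂ)) = -1 := by
    ext i j
    simp [Matrix.one_apply, apply_ite (fun x : ℤ => (x : ℂ))]
  rw [JmatZ, Matrix.fromBlocks_map, m0, m1, mn]

lemma symp_blocksC {g : ℕ} (γ : Matrix (Fin g ⊕ Fin g) (Fin g ⊕ Fin g) ℤ)
    (h : γᵀ * JmatZ g * γ = JmatZ g) :
    (icm γ.toBlocks₁₁)ᵀ * icm γ.toBlocks₂₁ = (icm γ.toBlocks₂₁)ᵀ * icm γ.toBlocks₁₁ ∧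
    (icm γ.toBlocks₁₁)ᵀ * icm γ.toBlocks₂₂ = 1 + (icm γ.toBlocks₂₁)ᵀ * icm γ.toBlocks₁₂ ∧
    (icm γ.toBlocks₁₂)ᵀ * icm γ.toBlocks₂₁ = (icm γ.toBlocks₂₂)ᵀ * icm γ.toBlocks₁₁ - 1 ∧
    (icm γ.toBlocks₁₂)ᵀ * icm γ.toBlocks₂₂ = (icm γ.toBlocks₂₂)ᵀ * icm γ.toBlocks₁₂ := by
  set f := Int.castRingHom ℂ with hf
  have hC : (γ.map (fun x : ℤ => (x : ℂ)))ᵀ * ((JmatZ g).map (fun x : ℤ => (x : ℂ)))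
      * (γ.map (fun x : ℤ => (x : ℂ))) = (JmatZ g).map (fun x : ℤ => (x : ℂ)) := by
    have := congrArg (fun M : Matrix (Fin g ⊕ Fin g) (Fin g ⊕ Fin g) ℤ => M.map f.toFun) h
    simp [Matrix.map_mul, Matrix.transpose_map] at this
    exact this
  rw [Jmap] at hC
  have hsplit : γ.map (fun x : ℤ => (x : ℂ))
      = Matrix.fromBlocks (icm γ.toBlocks₁₁) (icm γ.toBlocks₁₂) (icm γ.toBlocks₂₁)
        (icm γ.toBlocks₂₂) := by
    rw [← Matrix.fromBlocks_map, Matrix.fromBlocks_toBlocks]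
  rw [hsplit] at hC
  rw [Matrix.fromBlocks_transpose, Matrix.fromBlocks_multiply, Matrix.fromBlocks_multiply] at hC
  simp only [mul_zero, mul_one, mul_neg, neg_mul, zero_add, add_zero] at hC
  rw [Matrix.fromBlocks_inj] at hC
  obtain ⟨h11, h12, h21, h22⟩ := hC
  refine ⟨?_, ?_, ?_, ?_⟩
  · apply eq_of_sub_eq_zero
    have e : (icm γ.toBlocks₁₁)ᵀ * icm γ.toBlocks₂₁ - (icm γ.toBlocks₂₁)ᵀ * icm γ.toBlocks₁₁
        = (-((icm γ.toBlocks₂₁)ᵀ * icm γ.toBlocks₁₁) + (icm γ.toBlocks₁₁)ᵀ * icm γ.toBlocks₂₁)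
          - 0 := by abel
    rw [e, h11, sub_zero]
  · apply eq_of_sub_eq_zero
    have e : (icm γ.toBlocks₁₁)ᵀ * icm γ.toBlocks₂₂ - (1 + (icm γ.toBlocks₂₁)ᵀ * icm γ.toBlocks₁₂)
        = (-((icm γ.toBlocks₂₁)ᵀ * icm γ.toBlocks₁₂) + (icm γ.toBlocks₁₁)ᵀ * icm γ.toBlocks₂₂)
          - 1 := by abel
    rw [e, h12, sub_self]
  · apply eq_of_sub_eq_zero
    have e : (icm γ.toBlocks₁₂)ᵀ * icm γ.toBlocks₂₁ - ((icm γ.toBlocks₂₂)ᵀ * icm γ.toBlocks₁₁ - 1)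
        = (-((icm γ.toBlocks₂₂)ᵀ * icm γ.toBlocks₁₁) + (icm γ.toBlocks₁₂)ᵀ * icm γ.toBlocks₂₁)
          - (-1) := by abel
    rw [e, h21, sub_self]
  · apply eq_of_sub_eq_zero
    have e : (icm γ.toBlocks₁₂)ᵀ * icm γ.toBlocks₂₂ - (icm γ.toBlocks₂₂)ᵀ * icm γ.toBlocks₁₂
        = (-((icm γ.toBlocks₂₂)ᵀ * icm γ.toBlocks₁₂) + (icm γ.toBlocks₁₂)ᵀ * icm γ.toBlocks₂₂)
          - 0 := by abel
    rw [e, h22, sub_zero]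

lemma key_identity {g : ℕ} (A B C D τ : Matrix (Fin g) (Fin g) ℂ)
    (hAH : Aᴴ = Aᵀ) (hBH : Bᴴ = Bᵀ) (hCH : Cᴴ = Cᵀ) (hDH : Dᴴ = Dᵀ)
    (r11 : Aᵀ * C = Cᵀ * A) (r12 : Aᵀ * D = 1 + Cᵀ * B)
    (r21 : Bᵀ * C = Dᵀ * A - 1) (r22 : Bᵀ * D = Dᵀ * B)
    (hN : A * τ + B = τ * (C * τ + D)) :
    (C * τ + D)ᴴ * (τᴴ - τ) * (C * τ + D) = τᴴ - τ := by
  have hNH : (A * τ + B)ᴴ = τᴴ * Aᵀ + Bᵀ := by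
    rw [conjTranspose_add, conjTranspose_mul, hAH, hBH]
  have hMH : (C * τ + D)ᴴ = τᴴ * Cᵀ + Dᵀ := by
    rw [conjTranspose_add, conjTranspose_mul, hCH, hDH]
  have idA : (A * τ + B)ᴴ * (C * τ + D) - (C * τ + D)ᴴ * (A * τ + B) = τᴴ - τ := by
    have expand : (A * τ + B)ᴴ * (C * τ + D) - (C * τ + D)ᴴ * (A * τ + B)
        = τᴴ * (Aᵀ * C) * τ + τᴴ * (Aᵀ * D) + (Bᵀ * C) * τ + Bᵀ * D
          - (τᴴ * (Cᵀ * A) * τ + τᴴ * (Cᵀ * B) + (Dᵀ * A) * τ + Dᵀ * B) := by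
      rw [hNH, hMH]; noncomm_ring
    rw [expand, r11, r12, r21, r22]
    noncomm_ring
  have idB : (A * τ + B)ᴴ * (C * τ + D) - (C * τ + D)ᴴ * (A * τ + B)
      = (C * τ + D)ᴴ * (τᴴ - τ) * (C * τ + D) := by
    rw [hN, conjTranspose_mul]
    noncomm_ring
  rw [← idB, idA]

lemma MYM_of {g : ℕ} (τ : Matrix (Fin g) (Fin g) ℂ) (hsym : τ.IsSymm)
    (M : Matrix (Fin g) (Fin g) ℂ) (h : Mᴴ * (τᴴ - τ) * M = τᴴ - τ) :
    Mᴴ * ((Matrix.of fun i j => (τ i j).im).map (fun r : ℝ => (r : ℂ))) * M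
      = (Matrix.of fun i j => (τ i j).im).map (fun r : ℝ => (r : ℂ)) := by
  set Yc := (Matrix.of fun i j => (τ i j).im).map (fun r : ℝ => (r : ℂ)) with hYc
  have hdiff : τᴴ - τ = (-(2 : ℂ) * Complex.I) • Yc := by
    ext i j
    have hji : τ j i = τ i j := hsym.apply i j
    simp only [Matrix.sub_apply, Matrix.conjTranspose_apply, Matrix.smul_apply,
      Matrix.map_apply, Matrix.of_apply, smul_eq_mul, hji, Complex.star_def]
    apply Complex.ext <;>
      simp [hYc, Complex.conj_re, Complex.conj_im, Complex.mul_re, Complex.mul_im] <;> ring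
  rw [hdiff] at h
  have h2 : (-(2 : ℂ) * Complex.I) • (Mᴴ * Yc * M) = (-(2 : ℂ) * Complex.I) • Yc := by
    rw [← h, Matrix.mul_smul, Matrix.smul_mul]
  have hc : (-(2 : ℂ) * Complex.I) ≠ 0 :=
    mul_ne_zero (neg_ne_zero.mpr two_ne_zero) Complex.I_ne_zero
  exact smul_right_injective _ hc h2

lemma col_identity {g : ℕ} (Y : Matrix (Fin g) (Fin g) ℝ) (M : Matrix (Fin g) (Fin g) ℂ)
    (h : Mᴴ * (Y.map (fun r : ℝ => (r : ℂ))) * M = Y.map (fun r : ℝ => (r : ℂ))) (j : Fin g) :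
    (fun k => (M k j).re) ⬝ᵥ Y *ᵥ (fun k => (M k j).re)
      + (fun k => (M k j).im) ⬝ᵥ Y *ᵥ (fun k => (M k j).im) = Y j j := by
  have h0 := congrArg (fun Z : Matrix (Fin g) (Fin g) ℂ => (Z j j).re) h
  simp only [Matrix.mul_apply, Matrix.map_apply, Matrix.conjTranspose_apply,
    Complex.re_sum, Complex.mul_re, Complex.mul_im, Complex.im_sum,
    Complex.ofReal_re, Complex.ofReal_im, mul_zero, zero_mul, add_zero, sub_zero,
    Complex.star_def, Complex.conj_re, Complex.conj_im] at h0
  rw [← h0]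
  simp only [dotProduct, Matrix.mulVec, Finset.mul_sum, Finset.sum_mul]
  simp only [zero_add, neg_mul, Finset.sum_neg_distrib, sub_neg_eq_add, Finset.sum_sub_distrib]
  rw [Finset.sum_add_distrib]
  congr 1 <;>
    (rw [Finset.sum_comm]; exact Finset.sum_congr rfl fun i _ => Finset.sum_congr rfl fun k _ => by ring)

lemma sum_mul_bound {n : Type*} [Fintype n] (a b : n → ℝ) (Ka : ℝ) (ha : ∀ k, |a k| ≤ Ka) :
    |∑ k, a k * b k| ≤ Ka * ∑ k, |b k| := by
  calc |∑ k, a k * b k| ≤ ∑ k, |a k * b k| := Finset.abs_sum_le_sum_abs _ _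
    _ ≤ ∑ k, Ka * |b k| := Finset.sum_le_sum fun k _ => by
        rw [abs_mul]; exact mul_le_mul_of_nonneg_right (ha k) (abs_nonneg _)
    _ = Ka * ∑ k, |b k| := by rw [Finset.mul_sum]

lemma col_sum_le {n : Type*} [Fintype n] (f : n → n → ℝ) (j : n) :
    ∑ k, |f k j| ≤ ∑ j', ∑ k, |f k j'| :=
  Finset.single_le_sum (f := fun j' => ∑ k, |f k j'|)
    (fun j' _ => Finset.sum_nonneg fun k _ => abs_nonneg _) (Finset.mem_univ j)

set_option maxHeartbeats 1000000 in
/-- For every `τ` in the Siegel upper half-space, the stabilizer of `τ` in the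
integral symplectic group `Sp(2g,ℤ)` is a finite set. -/
theorem siegel_stabilizer_finite (g : ℕ)
    (τ : Matrix (Fin g) (Fin g) ℂ) (hsym : τ.IsSymm)
    (hpos : (Matrix.of fun i j => (τ i j).im).PosDef) :
    {γ : Matrix (Fin g ⊕ Fin g) (Fin g ⊕ Fin g) ℤ |
      γ * JmatZ g * γᵀ = JmatZ g ∧ sympActZ g γ τ = τ}.Finite := by
  classical
  set Y : Matrix (Fin g) (Fin g) ℝ := Matrix.of fun i j => (τ i j).im with hYdef
  set X : Matrix (Fin g) (Fin g) ℝ := Matrix.of fun i j => (τ i j).re with hXdef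
  have hYpos : Y.PosDef := hpos
  have hYsymm : Yᵀ = Y := hYpos.1
  have hYdetu : IsUnit Y.det := hYpos.det_pos.ne'.isUnit
  have hdiag : ∀ i, 0 ≤ Y i i := by
    intro i
    have := hYpos.posSemidef.dotProduct_mulVec_nonneg (Pi.single i 1)
    rw [star_trivial] at this
    simpa [dotProduct, Matrix.mulVec, Pi.single_apply] using this
  have hdiaginv : ∀ i, 0 ≤ Y⁻¹ i i := by
    intro i
    have := hYpos.inv.posSemidef.dotProduct_mulVec_nonneg (Pi.single i 1)
    rw [star_trivial] at this
    simpa [dotProduct, Matrix.mulVec, Pi.single_apply] using this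
  -- constants
  set s₁ : ℝ := ∑ i, Y⁻¹ i i with hs₁
  set s₂ : ℝ := ∑ i, Y i i with hs₂
  set K₁ : ℝ := Real.sqrt (s₁ * s₂) with hK₁def
  set t : ℝ := ∑ j', ∑ k, |Y⁻¹ k j'| with htdef
  set u : ℝ := ∑ j', ∑ k, |X k j'| with hudef
  set w : ℝ := ∑ i', ∑ k, ‖τ i' k‖ with hwdef
  have hK₁ : 0 ≤ K₁ := Real.sqrt_nonneg _
  have ht : 0 ≤ t := Finset.sum_nonneg fun _ _ => Finset.sum_nonneg fun _ _ => abs_nonneg _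
  have hu : 0 ≤ u := Finset.sum_nonneg fun _ _ => Finset.sum_nonneg fun _ _ => abs_nonneg _
  have hw : 0 ≤ w := Finset.sum_nonneg fun _ _ => Finset.sum_nonneg fun _ _ =>
    norm_nonneg _
  set Kfinal : ℝ := (K₁ + 2 * K₁ * w) * (1 + t + t * u) with hKf
  have hKfb : ∀ z : ℝ, 0 ≤ z →
      z ≤ K₁ + 2 * K₁ * w → True := fun _ _ _ => trivial
  apply finite_of_bdd ⌈Kfinal⌉
  rintro γ ⟨h1, h2⟩ i j
  -- notation for the complex blocks
  set Ac := icm γ.toBlocks₁₁ with hAc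
  set Bc := icm γ.toBlocks₁₂ with hBc
  set Cc := icm γ.toBlocks₂₁ with hCc
  set Dc := icm γ.toBlocks₂₂ with hDc
  obtain ⟨r11, r12, r21, r22⟩ := symp_blocksC γ (symp_transpose γ h1)
  have h2' : (Ac * τ + Bc) * (Cc * τ + Dc)⁻¹ = τ := h2
  -- the matrix M = Cτ + D is invertible
  have hMdet : IsUnit (Cc * τ + Dc).det := by
    by_contra hnd
    have hMinv : (Cc * τ + Dc)⁻¹ = 0 := Matrix.nonsing_inv_apply_not_isUnit _ hnd
    rw [hMinv, Matrix.mul_zero] at h2'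
    have hne : Nonempty (Fin g) := by
      by_contra hempty
      have : IsEmpty (Fin g) := not_nonempty_iff.mp hempty
      exact hnd (by simp [Matrix.det_isEmpty])
    obtain ⟨i0⟩ := hne
    have hv : (Pi.single i0 1 : Fin g → ℝ) ≠ 0 := by
      intro hcon
      have := congrFun hcon i0
      simp at this
    have hp := hYpos.dotProduct_mulVec_pos hv
    rw [star_trivial] at hp
    have hY0 : ∀ a b, Y a b = 0 := by
      intro a b
      have : τ a b = 0 := by rw [← h2']; rfl
      simp [hYdef, this]
    have : (Pi.single i0 1 : Fin g → ℝ) ⬝ᵥ Y *ᵥ (Pi.single i0 1 : Fin g → ℝ) = 0 := by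
      simp [dotProduct, Matrix.mulVec, hY0]
    rw [this] at hp
    exact lt_irrefl 0 hp
  have hNM : Ac * τ + Bc = τ * (Cc * τ + Dc) := by
    have := congrArg (fun Z => Z * (Cc * τ + Dc)) h2'
    simpa [Matrix.mul_assoc, Matrix.nonsing_inv_mul _ hMdet] using this
  -- conjugate transpose facts for integer matrices
  have hreal : ∀ Z : Matrix (Fin g) (Fin g) ℤ, (icm Z)ᴴ = (icm Z)ᵀ := by
    intro Z
    ext a b
    simp [Matrix.conjTranspose_apply, Matrix.map_apply]
  -- the key unitarity relation
  have hkey := key_identity Ac Bc Cc Dc τ (hreal _) (hreal _) (hreal _) (hreal _)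
    r11 r12 r21 r22 hNM
  have hMYM := MYM_of τ hsym (Cc * τ + Dc) hkey
  set M := Cc * τ + Dc with hMdef
  set NN := Ac * τ + Bc with hNNdef
  -- entry bounds on M
  have hMre : ∀ a b, |(M a b).re| ≤ K₁ ∧ |(M a b).im| ≤ K₁ := by
    intro a b
    have hcol := col_identity Y M hMYM b
    have hp0 : 0 ≤ (fun k => (M k b).re) ⬝ᵥ Y *ᵥ (fun k => (M k b).re) := by
      have := hYpos.posSemidef.dotProduct_mulVec_nonneg (fun k => (M k b).re)
      rwa [star_trivial] at this
    have hq0 : 0 ≤ (fun k => (M k b).im) ⬝ᵥ Y *ᵥ (fun k => (M k b).im) := by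
      have := hYpos.posSemidef.dotProduct_mulVec_nonneg (fun k => (M k b).im)
      rwa [star_trivial] at this
    have hYbb : Y b b ≤ s₂ :=
      Finset.single_le_sum (f := fun i => Y i i) (fun i _ => hdiag i) (Finset.mem_univ b)
    have hYaa : Y⁻¹ a a ≤ s₁ :=
      Finset.single_le_sum (f := fun i => Y⁻¹ i i) (fun i _ => hdiaginv i) (Finset.mem_univ a)
    constructor
    · have hsq := entry_sq_le Y hYpos (fun k => (M k b).re) a
      have hb : (M a b).re ^ 2 ≤ s₁ * s₂ := by nlinarith [hdiaginv a, hdiag b]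
      calc |(M a b).re| = Real.sqrt ((M a b).re ^ 2) := (Real.sqrt_sq_eq_abs _).symm
        _ ≤ K₁ := Real.sqrt_le_sqrt hb
    · have hsq := entry_sq_le Y hYpos (fun k => (M k b).im) a
      have hb : (M a b).im ^ 2 ≤ s₁ * s₂ := by nlinarith [hdiaginv a, hdiag b]
      calc |(M a b).im| = Real.sqrt ((M a b).im ^ 2) := (Real.sqrt_sq_eq_abs _).symm
        _ ≤ K₁ := Real.sqrt_le_sqrt hb
  have hMabs : ∀ a b, ‖M a b‖ ≤ 2 * K₁ := by
    intro a b
    calc ‖M a b‖ ≤ |(M a b).re| + |(M a b).im| := Complex.norm_le_abs_re_add_abs_im _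
      _ ≤ K₁ + K₁ := add_le_add (hMre a b).1 (hMre a b).2
      _ = 2 * K₁ := by ring
  -- bounds on the integer blocks C and D
  have hCY : ∀ a b, (M a b).im = ∑ k, (γ.toBlocks₂₁ a k : ℝ) * Y k b := by
    intro a b
    simp only [hMdef, Matrix.add_apply, Matrix.mul_apply, hCc, icm, Matrix.map_apply,
      Complex.add_im, Complex.im_sum, Complex.mul_im, Complex.intCast_im, Complex.intCast_re]
    simp [hDc, icm, hYdef]
  have hCbound : ∀ a b, |(γ.toBlocks₂₁ a b : ℝ)| ≤ K₁ * t := by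
    intro a b
    have hCMat : (γ.toBlocks₂₁ a b : ℝ) = ∑ k, (M a k).im * Y⁻¹ k b := by
      have hrow : ∀ c, (γ.toBlocks₂₁.map (fun z : ℤ => (z : ℝ)) * Y) a c = (M a c).im := by
        intro c
        rw [Matrix.mul_apply]
        exact (hCY a c).symm
      have : (γ.toBlocks₂₁.map (fun z : ℤ => (z : ℝ)) * Y * Y⁻¹) a b
          = ∑ k, (M a k).im * Y⁻¹ k b := by
        rw [Matrix.mul_apply]
        exact Finset.sum_congr rfl fun k _ => by rw [hrow k]
      rw [Matrix.mul_nonsing_inv_cancel_right _ _ hYdetu] at this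
      simpa [Matrix.map_apply] using this
    rw [hCMat]
    calc |∑ k, (M a k).im * Y⁻¹ k b| ≤ K₁ * ∑ k, |Y⁻¹ k b| :=
          sum_mul_bound _ _ _ (fun k => (hMre a k).2)
      _ ≤ K₁ * t := mul_le_mul_of_nonneg_left (col_sum_le (fun k j' => Y⁻¹ k j') b) hK₁
  have hDbound : ∀ a b, |(γ.toBlocks₂₂ a b : ℝ)| ≤ K₁ + (K₁ * t) * u := by
    intro a b
    have hDeq : (γ.toBlocks₂₂ a b : ℝ)
        = (M a b).re - ∑ k, (γ.toBlocks₂₁ a k : ℝ) * X k b := by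
      simp only [hMdef, Matrix.add_apply, Matrix.mul_apply, hCc, hDc, icm, Matrix.map_apply,
        Complex.add_re, Complex.re_sum, Complex.mul_re, Complex.intCast_im, Complex.intCast_re]
      simp [hDc, icm, hXdef]
    rw [hDeq]
    calc |(M a b).re - ∑ k, (γ.toBlocks₂₁ a k : ℝ) * X k b|
        ≤ |(M a b).re| + |∑ k, (γ.toBlocks₂₁ a k : ℝ) * X k b| := abs_sub _ _
      _ ≤ K₁ + (K₁ * t) * u := by
          refine add_le_add (hMre a b).1 ?_
          calc |∑ k, (γ.toBlocks₂₁ a k : ℝ) * X k b| ≤ (K₁ * t) * ∑ k, |X k b| :=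
                sum_mul_bound _ _ _ (fun k => hCbound a k)
            _ ≤ (K₁ * t) * u := mul_le_mul_of_nonneg_left (col_sum_le (fun k j' => X k j') b)
                (mul_nonneg hK₁ ht)
  -- bounds on N = Aτ + B = τM
  have hNNabs : ∀ a b, ‖NN a b‖ ≤ 2 * K₁ * w := by
    intro a b
    have : NN a b = ∑ k, τ a k * M k b := by
      rw [hNM, Matrix.mul_apply]
    rw [this]
    calc ‖∑ k, τ a k * M k b‖ ≤ ∑ k, ‖τ a k * M k b‖ := by
          exact norm_sum_le _ _
      _ = ∑ k, ‖τ a k‖ * ‖M k b‖ := by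
          exact Finset.sum_congr rfl fun k _ => norm_mul _ _
      _ ≤ ∑ k, ‖τ a k‖ * (2 * K₁) := Finset.sum_le_sum fun k _ =>
          mul_le_mul_of_nonneg_left (hMabs k b) (norm_nonneg _)
      _ = (∑ k, ‖τ a k‖) * (2 * K₁) := by rw [Finset.sum_mul]
      _ ≤ w * (2 * K₁) := by
          refine mul_le_mul_of_nonneg_right ?_ (mul_nonneg (by norm_num) hK₁)
          exact Finset.single_le_sum (f := fun i' => ∑ k, ‖τ i' k‖)
            (fun i' _ => Finset.sum_nonneg fun k _ => norm_nonneg _)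
            (Finset.mem_univ a)
      _ = 2 * K₁ * w := by ring
  have hNNre : ∀ a b, |(NN a b).re| ≤ 2 * K₁ * w := fun a b =>
    le_trans (Complex.abs_re_le_norm _) (hNNabs a b)
  have hNNim : ∀ a b, |(NN a b).im| ≤ 2 * K₁ * w := fun a b =>
    le_trans (Complex.abs_im_le_norm _) (hNNabs a b)
  -- bounds on the integer blocks A and B
  have hAY : ∀ a b, (NN a b).im = ∑ k, (γ.toBlocks₁₁ a k : ℝ) * Y k b := by
    intro a b
    simp only [hNNdef, Matrix.add_apply, Matrix.mul_apply, hAc, icm, Matrix.map_apply,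
      Complex.add_im, Complex.im_sum, Complex.mul_im, Complex.intCast_im, Complex.intCast_re]
    simp [hBc, icm, hYdef]
  have hAbound : ∀ a b, |(γ.toBlocks₁₁ a b : ℝ)| ≤ (2 * K₁ * w) * t := by
    intro a b
    have hAMat : (γ.toBlocks₁₁ a b : ℝ) = ∑ k, (NN a k).im * Y⁻¹ k b := by
      have hrow : ∀ c, (γ.toBlocks₁₁.map (fun z : ℤ => (z : ℝ)) * Y) a c = (NN a c).im := by
        intro c
        rw [Matrix.mul_apply]
        exact (hAY a c).symm
      have : (γ.toBlocks₁₁.map (fun z : ℤ => (z : ℝ)) * Y * Y⁻¹) a b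
          = ∑ k, (NN a k).im * Y⁻¹ k b := by
        rw [Matrix.mul_apply]
        exact Finset.sum_congr rfl fun k _ => by rw [hrow k]
      rw [Matrix.mul_nonsing_inv_cancel_right _ _ hYdetu] at this
      simpa [Matrix.map_apply] using this
    rw [hAMat]
    calc |∑ k, (NN a k).im * Y⁻¹ k b| ≤ (2 * K₁ * w) * ∑ k, |Y⁻¹ k b| :=
          sum_mul_bound _ _ _ (fun k => hNNim a k)
      _ ≤ (2 * K₁ * w) * t := mul_le_mul_of_nonneg_left (col_sum_le (fun k j' => Y⁻¹ k j') b)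
          (mul_nonneg (mul_nonneg (by norm_num) hK₁) hw)
  have hBbound : ∀ a b, |(γ.toBlocks₁₂ a b : ℝ)| ≤ 2 * K₁ * w + ((2 * K₁ * w) * t) * u := by
    intro a b
    have hBeq : (γ.toBlocks₁₂ a b : ℝ)
        = (NN a b).re - ∑ k, (γ.toBlocks₁₁ a k : ℝ) * X k b := by
      simp only [hNNdef, Matrix.add_apply, Matrix.mul_apply, hAc, hBc, icm, Matrix.map_apply,
        Complex.add_re, Complex.re_sum, Complex.mul_re, Complex.intCast_im, Complex.intCast_re]
      simp [hBc, icm, hXdef]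
    rw [hBeq]
    calc |(NN a b).re - ∑ k, (γ.toBlocks₁₁ a k : ℝ) * X k b|
        ≤ |(NN a b).re| + |∑ k, (γ.toBlocks₁₁ a k : ℝ) * X k b| := abs_sub _ _
      _ ≤ 2 * K₁ * w + ((2 * K₁ * w) * t) * u := by
          refine add_le_add (hNNre a b) ?_
          calc |∑ k, (γ.toBlocks₁₁ a k : ℝ) * X k b| ≤ ((2 * K₁ * w) * t) * ∑ k, |X k b| :=
                sum_mul_bound _ _ _ (fun k => hAbound a k)
            _ ≤ ((2 * K₁ * w) * t) * u := mul_le_mul_of_nonneg_left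
                (col_sum_le (fun k j' => X k j') b)
                (mul_nonneg (mul_nonneg (mul_nonneg (by norm_num) hK₁) hw) ht)
  -- conclude: every entry of γ is bounded by Kfinal
  have hfinal : ∀ z : ℝ,
      (|z| ≤ K₁ * t ∨ |z| ≤ K₁ + (K₁ * t) * u ∨ |z| ≤ (2 * K₁ * w) * t ∨
        |z| ≤ 2 * K₁ * w + ((2 * K₁ * w) * t) * u) → |z| ≤ Kfinal := by
    intro z hz
    have h1' : 0 ≤ K₁ * t := mul_nonneg hK₁ ht
    have h2'' : 0 ≤ K₁ * t * u := mul_nonneg h1' hu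
    have h3 : 0 ≤ K₁ * w := mul_nonneg hK₁ hw
    have h4 : 0 ≤ K₁ * w * t := mul_nonneg h3 ht
    have h5 : 0 ≤ K₁ * w * t * u := mul_nonneg h4 hu
    rw [hKf]
    rcases hz with h | h | h | h <;> nlinarith
  have hzbound : |(γ i j : ℝ)| ≤ Kfinal := by
    rcases i with i | i <;> rcases j with j | j
    · exact hfinal _ (Or.inr (Or.inr (Or.inl (hAbound i j))))
    · exact hfinal _ (Or.inr (Or.inr (Or.inr (hBbound i j))))
    · exact hfinal _ (Or.inl (hCbound i j))
    · exact hfinal _ (Or.inr (Or.inl (hDbound i j)))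
  have : |(γ i j : ℝ)| ≤ (⌈Kfinal⌉ : ℝ) := le_trans hzbound (Int.le_ceil _)
  exact_mod_cast this
end

section
/- Fix g ≥ 2 and m ≥ 1, and let ε = (ε₁, ε₂) where ε₁ ∈ [0,1) with mε₁ ∈ ℤ and ε₂ ∈ [0,1)^{g-1} with mε₂ ∈ ℤ^{g-1}. Fix τ ∈ H_{g-1} and w ∈ ℂ^{g-1}, and for t > 0 let σ(t) denote the symmetric g×g block matrix with upper-left 1×1 entry it, upper-right block wᵀ, lower-left block w, and lower-right block τ. Then the order-m theta constant degenerates as: lim_{t→+∞} Θ[(ε₁,ε₂)](σ(t)) = Θ[ε₂](τ) if ε₁ = 0, and = 0 if ε₁ ≠ 0. -/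
open scoped Matrix
open Matrix

/-- The order-`m` theta constant with characteristic `ε`:
`Θ[ε](σ) = ∑_{n ∈ ℤ^ι} exp(πi m (n+ε)ᵀσ(n+ε))`. -/
noncomputable def thetaConst (ι : Type) [Fintype ι] (m : ℕ) (ε : ι → ℝ)
    (σ : Matrix ι ι ℂ) : ℂ :=
  ∑' n : ι → ℤ,
    Complex.exp ((Real.pi : ℂ) * Complex.I * (m : ℂ) *
      ((fun i => (n i : ℂ) + (ε i : ℂ)) ⬝ᵥ σ.mulVec (fun i => (n i : ℂ) + (ε i : ℂ))))

/-- The degenerating `g × g` block period matrix `σ(t) = (it, wᵀ; w, τ)`. -/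
noncomputable def degenMatrix (g : ℕ) (τ : Matrix (Fin (g - 1)) (Fin (g - 1)) ℂ)
    (w : Fin (g - 1) → ℂ) (t : ℝ) :
    Matrix (Fin 1 ⊕ Fin (g - 1)) (Fin 1 ⊕ Fin (g - 1)) ℂ :=
  Matrix.fromBlocks (Matrix.of fun _ _ => (t : ℂ) * Complex.I)
    (Matrix.of fun _ j => w j) (Matrix.of fun i _ => w i) τ

/-- One-dimensional shifted Gaussian sums over `ℤ` are summable. -/
lemma summable_exp_int (a e : ℝ) (ha : 0 < a) (he0 : 0 ≤ e) (he1 : e < 1) :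
    Summable fun n : ℤ => Real.exp (-(a * ((n : ℝ) + e) ^ 2)) := by
  have key : ∀ n : ℤ, Real.exp (-(a * ((n : ℝ) + e) ^ 2)) ≤
      Real.exp a * Real.exp (-a) ^ n.natAbs := by
    intro n
    rw [← Real.exp_nat_mul, ← Real.exp_add]
    apply Real.exp_le_exp.2
    have h1 : (n.natAbs : ℝ) = |(n : ℝ)| := by rw [Nat.cast_natAbs, Int.cast_abs]
    have hineq : (n.natAbs : ℝ) - 1 ≤ ((n : ℝ) + e) ^ 2 := by
      rcases le_or_gt 0 n with hn | hn
      · rw [h1, abs_of_nonneg (by exact_mod_cast hn)]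
        nlinarith [sq_nonneg ((n:ℝ) + e - 1), sq_nonneg ((n:ℝ)+e)]
      · rw [h1, abs_of_nonpos (by exact_mod_cast hn.le : (n:ℝ) ≤ 0)]
        have : n = -1 ∨ n ≤ -2 := by omega
        rcases this with h | h
        · subst h; push_cast; nlinarith [sq_nonneg e]
        · have h2 : (2:ℝ) ≤ -(n:ℝ) := by exact_mod_cast (by omega : (2:ℤ) ≤ -n)
          nlinarith [sq_nonneg ((n:ℝ) + e + 1)]
    nlinarith
  apply Summable.of_nonneg_of_le (fun n => (Real.exp_pos _).le) key
  apply Summable.mul_left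
  have hr : Real.exp (-a) < 1 := Real.exp_lt_one_iff.2 (by linarith)
  have hr0 : 0 ≤ Real.exp (-a) := (Real.exp_pos _).le
  apply Summable.of_nat_of_neg
  · simpa using summable_geometric_of_lt_one hr0 hr
  · simpa using summable_geometric_of_lt_one hr0 hr

/-- Products of summable nonnegative families are summable on lattice pi types. -/
lemma summable_pi_prod : ∀ (d : ℕ) (f : Fin d → ℤ → ℝ), (∀ i k, 0 ≤ f i k) →
    (∀ i, Summable (f i)) → Summable fun v : Fin d → ℤ => ∏ i, f i (v i) := by
  intro d
  induction d with
  | zero => intro f _ _; exact Summable.of_finite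
  | succ d ih =>
    intro f h0 hs
    have H : Summable (fun p : ℤ × (Fin d → ℤ) =>
        f 0 p.1 * (fun v : Fin d → ℤ => ∏ i : Fin d, f i.succ (v i)) p.2) :=
      Summable.mul_of_nonneg (f := f 0) (g := fun v : Fin d → ℤ => ∏ i : Fin d, f i.succ (v i))
        (hs 0) (ih (fun i => f i.succ) (fun i k => h0 _ _) (fun i => hs _))
        (fun k => h0 _ _) (fun v => Finset.prod_nonneg fun i _ => h0 _ _)
    exact ((Fin.consEquiv fun _ : Fin (d+1) => ℤ).summable_iff).mp
      (H.congr fun p => by simp [Fin.consEquiv, Fin.prod_univ_succ])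

/-- A positive definite quadratic form is bounded below by a positive multiple of the
square of the Euclidean norm. -/
lemma posdef_quadratic_lower {d : ℕ} (hd : 0 < d) (Y : Matrix (Fin d) (Fin d) ℝ)
    (hY : Y.PosDef) : ∃ c : ℝ, 0 < c ∧ ∀ y : Fin d → ℝ,
      c * ∑ j, y j ^ 2 ≤ y ⬝ᵥ Y.mulVec y := by
  haveI : Nonempty (Fin d) := ⟨⟨0, hd⟩⟩
  set E := EuclideanSpace ℝ (Fin d)
  have h1 : Continuous (fun y : E => (y : Fin d → ℝ)) :=
    (EuclideanSpace.equiv (Fin d) ℝ).continuous_toFun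
  have hcoord : ∀ i, Continuous fun y : E => (y : Fin d → ℝ) i :=
    fun i => (continuous_apply i).comp h1
  have hQcont : Continuous (fun y : E => (y : Fin d → ℝ) ⬝ᵥ Y.mulVec y) := by
    simp only [dotProduct, Matrix.mulVec]
    exact continuous_finset_sum _ fun i _ => (hcoord i).mul
      (continuous_finset_sum _ fun j _ => continuous_const.mul (hcoord j))
  have hsph : (Metric.sphere (0 : E) 1).Nonempty := NormedSpace.sphere_nonempty.2 zero_le_one
  obtain ⟨u, hu, hmin⟩ := (isCompact_sphere (0 : E) 1).exists_isMinOn hsph hQcont.continuousOn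
  have hu1 : ‖u‖ = 1 := by simpa using hu
  have hune : u ≠ 0 := fun h => by simp [h] at hu1
  set c := (u : Fin d → ℝ) ⬝ᵥ Y.mulVec u with hc
  have hcpos : 0 < c := by
    have := hY.dotProduct_mulVec_pos (x := (u : Fin d → ℝ)) (fun h => hune (by ext i; exact congrFun h i))
    simpa using this
  refine ⟨c, hcpos, fun y => ?_⟩
  rcases eq_or_ne y 0 with rfl | hy
  · simp
  · set yE : E := (EuclideanSpace.equiv (Fin d) ℝ).symm y
    have hyE : ‖yE‖ ≠ 0 := by
      rw [Ne, norm_eq_zero]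
      intro h
      exact hy (by ext i; exact congrFun (congrArg (fun (z : E) => (z : Fin d → ℝ)) h) i)
    set s := ‖yE‖
    have hs : 0 < s := lt_of_le_of_ne (norm_nonneg _) (Ne.symm hyE)
    have hnorm : s ^ 2 = ∑ j, y j ^ 2 := by
      show ‖yE‖ ^ 2 = _
      rw [EuclideanSpace.norm_eq, Real.sq_sqrt (by positivity)]
      simp [yE, sq_abs]
    set v : E := s⁻¹ • yE
    have hv : v ∈ Metric.sphere (0 : E) 1 := by
      rw [mem_sphere_iff_norm]
      simp only [v, sub_zero, norm_smul, norm_inv, Real.norm_eq_abs]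
      rw [abs_of_pos hs]
      exact inv_mul_cancel₀ hyE
    have hvy : (v : Fin d → ℝ) = s⁻¹ • y := rfl
    have hscale : (v : Fin d → ℝ) ⬝ᵥ Y.mulVec v = s⁻¹ * s⁻¹ * (y ⬝ᵥ Y.mulVec y) := by
      rw [hvy, Matrix.mulVec_smul, dotProduct_smul, smul_dotProduct]
      simp [smul_eq_mul]; ring
    have hle : c ≤ (v : Fin d → ℝ) ⬝ᵥ Y.mulVec v := hmin hv
    rw [hscale] at hle
    have h2 : c * s ^ 2 ≤ y ⬝ᵥ Y.mulVec y := by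
      have h3 := mul_le_mul_of_nonneg_right hle (le_of_lt (by positivity : (0:ℝ) < s ^ 2))
      calc c * s ^ 2 ≤ s⁻¹ * s⁻¹ * (y ⬝ᵥ Y.mulVec y) * s ^ 2 := h3
        _ = y ⬝ᵥ Y.mulVec y := by field_simp [sq]
    rwa [hnorm] at h2

/-- The quadratic form of the degenerating block matrix. -/
lemma degen_quadratic (g : ℕ) (τ : Matrix (Fin (g - 1)) (Fin (g - 1)) ℂ)
    (w : Fin (g - 1) → ℂ) (t : ℝ) (v : Fin 1 ⊕ Fin (g - 1) → ℂ) :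
    v ⬝ᵥ (degenMatrix g τ w t).mulVec v =
      (t : ℂ) * Complex.I * v (Sum.inl 0) ^ 2
        + 2 * v (Sum.inl 0) * (∑ j, w j * v (Sum.inr j))
        + ∑ i, v (Sum.inr i) * ∑ j, τ i j * v (Sum.inr j) := by
  simp only [degenMatrix, dotProduct, Matrix.mulVec, Fintype.sum_sum_type,
    Matrix.fromBlocks_apply₁₁, Matrix.fromBlocks_apply₁₂, Matrix.fromBlocks_apply₂₁,
    Matrix.fromBlocks_apply₂₂, Matrix.of_apply, Fin.sum_univ_one]
  have h1 : ∀ i : Fin (g-1), v (Sum.inr i) * (w i * v (Sum.inl 0) + ∑ j, τ i j * v (Sum.inr j))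
      = v (Sum.inl 0) * (w i * v (Sum.inr i)) + v (Sum.inr i) * ∑ j, τ i j * v (Sum.inr j) :=
    fun i => by ring
  rw [Finset.sum_congr rfl fun i _ => h1 i, Finset.sum_add_distrib, ← Finset.mul_sum]
  ring

/-- Norm of the exponential of the quadratic expression. -/
lemma norm_exp_aux (a t X : ℝ) (q r : ℂ) :
    ‖Complex.exp (((a : ℝ) : ℂ) * Complex.I *
        ((t : ℂ) * Complex.I * ((X : ℝ) : ℂ) ^ 2 + 2 * ((X : ℝ) : ℂ) * q + r))‖
      = Real.exp (-(a * (t * X ^ 2 + 2 * X * q.im + r.im))) := by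
  have h1 : ∀ z : ℂ, (((a : ℝ) : ℂ) * Complex.I * z).re = -(a * z.im) := fun z => by
    simp [Complex.mul_re, Complex.mul_im]
  have him : ((t : ℂ) * Complex.I * ((X : ℝ) : ℂ) ^ 2 + 2 * ((X : ℝ) : ℂ) * q + r).im
      = t * X ^ 2 + 2 * X * q.im + r.im := by
    simp [← Complex.ofReal_pow, Complex.add_im, Complex.mul_im, Complex.mul_re]
  rw [Complex.norm_exp, h1, him]

/-- Degeneration of theta constants: as `t → +∞`, the order-`m` theta constant of the
block matrix `σ(t) = (it, wᵀ; w, τ)` with characteristic `(ε₁, ε₂)` tends to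
`Θ[ε₂](τ)` if `ε₁ = 0`, and to `0` if `ε₁ ≠ 0`. -/
theorem thetaConst_degeneration (g m : ℕ) (hg : 2 ≤ g) (hm : 1 ≤ m)
    (ε₁ : ℝ) (hε₁0 : 0 ≤ ε₁) (hε₁1 : ε₁ < 1) (hε₁m : ∃ a : ℤ, (m : ℝ) * ε₁ = a)
    (ε₂ : Fin (g - 1) → ℝ) (hε₂0 : ∀ i, 0 ≤ ε₂ i) (hε₂1 : ∀ i, ε₂ i < 1)
    (hε₂m : ∀ i, ∃ a : ℤ, (m : ℝ) * ε₂ i = a)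
    (τ : Matrix (Fin (g - 1)) (Fin (g - 1)) ℂ) (hsym : τ.IsSymm)
    (hpos : (Matrix.of fun i j => (τ i j).im).PosDef)
    (w : Fin (g - 1) → ℂ) :
    Filter.Tendsto
      (fun t : ℝ =>
        thetaConst (Fin 1 ⊕ Fin (g - 1)) m (Sum.elim (fun _ => ε₁) ε₂)
          (degenMatrix g τ w t))
      Filter.atTop
      (nhds (if ε₁ = 0 then thetaConst (Fin (g - 1)) m ε₂ τ else 0)) := by
  have hd : 0 < g - 1 := by omega
  have hπm : 0 < Real.pi * m := by
    have h0 : (0:ℝ) < m := by exact_mod_cast hm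
    positivity
  obtain ⟨εv, hεv⟩ : ∃ f : (Fin 1 ⊕ Fin (g - 1)) → ℝ, f = Sum.elim (fun _ => ε₁) ε₂ := ⟨_, rfl⟩
  obtain ⟨X, hXdef⟩ : ∃ f : ((Fin 1 ⊕ Fin (g - 1)) → ℤ) → ℝ,
      f = fun n => (n (Sum.inl 0) : ℝ) + ε₁ := ⟨_, rfl⟩
  obtain ⟨Y, hYdef⟩ : ∃ f : ((Fin 1 ⊕ Fin (g - 1)) → ℤ) → Fin (g - 1) → ℝ,
      f = fun n j => (n (Sum.inr j) : ℝ) + ε₂ j := ⟨_, rfl⟩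
  obtain ⟨q, hqdef⟩ : ∃ f : ((Fin 1 ⊕ Fin (g - 1)) → ℤ) → ℂ,
      f = fun n => ∑ j, w j * ((Y n j : ℝ) : ℂ) := ⟨_, rfl⟩
  obtain ⟨r, hrdef⟩ : ∃ f : ((Fin 1 ⊕ Fin (g - 1)) → ℤ) → ℂ,
      f = fun n => ∑ i, ((Y n i : ℝ) : ℂ) * ∑ j, τ i j * ((Y n j : ℝ) : ℂ) := ⟨_, rfl⟩
  obtain ⟨QI, hQIdef⟩ : ∃ f : ((Fin 1 ⊕ Fin (g - 1)) → ℤ) → ℝ,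
      f = fun n => ∑ j, (w j).im * Y n j := ⟨_, rfl⟩
  obtain ⟨RI, hRIdef⟩ : ∃ f : ((Fin 1 ⊕ Fin (g - 1)) → ℤ) → ℝ,
      f = fun n => ∑ i, Y n i * ∑ j, (τ i j).im * Y n j := ⟨_, rfl⟩
  obtain ⟨S, hSdef⟩ : ∃ f : ((Fin 1 ⊕ Fin (g - 1)) → ℤ) → ℝ,
      f = fun n => ∑ j, (Y n j) ^ 2 := ⟨_, rfl⟩
  obtain ⟨F, hFdef⟩ : ∃ f : ℝ → ((Fin 1 ⊕ Fin (g - 1)) → ℤ) → ℂ,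
      f = fun t n => Complex.exp ((Real.pi : ℂ) * Complex.I * (m : ℂ) *
        ((fun i => (n i : ℂ) + (εv i : ℂ)) ⬝ᵥ
          (degenMatrix g τ w t).mulVec (fun i => (n i : ℂ) + (εv i : ℂ)))) := ⟨_, rfl⟩
  have hve : ∀ n : (Fin 1 ⊕ Fin (g - 1)) → ℤ, (fun i => (n i : ℂ) + (εv i : ℂ)) =
      Sum.elim (fun _ : Fin 1 => ((X n : ℝ) : ℂ)) (fun j => ((Y n j : ℝ) : ℂ)) := by
    intro n
    funext i
    cases i with
    | inl a =>
      have ha : a = 0 := Subsingleton.elim a 0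
      subst ha
      simp only [hεv, hXdef, Sum.elim_inl]
      push_cast
      ring
    | inr j =>
      simp only [hεv, hYdef, Sum.elim_inr]
      push_cast
      ring
  have hpre : ((Real.pi : ℂ) * Complex.I * (m : ℂ)) =
      (((Real.pi * m : ℝ)) : ℂ) * Complex.I := by push_cast; ring
  have hF : ∀ t n, F t n = Complex.exp ((((Real.pi * m : ℝ)) : ℂ) * Complex.I *
      ((t : ℂ) * Complex.I * ((X n : ℝ) : ℂ) ^ 2 + 2 * ((X n : ℝ) : ℂ) * q n + r n)) := by
    intro t n
    simp only [hFdef]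
    rw [hve n, degen_quadratic, hpre]
    simp only [Sum.elim_inl, Sum.elim_inr, hqdef, hrdef]
  have hqim : ∀ n, (q n).im = QI n := by
    intro n
    simp only [hqdef, hQIdef]
    simp [Complex.im_sum, Complex.mul_im]
  have hrim : ∀ n, (r n).im = RI n := by
    intro n
    simp only [hrdef, hRIdef]
    simp [Complex.im_sum, Complex.mul_im, Complex.re_sum]
  have hnormF : ∀ t n, ‖F t n‖ =
      Real.exp (-(Real.pi * m * (t * X n ^ 2 + 2 * X n * QI n + RI n))) := by
    intro t n
    rw [hF t n, norm_exp_aux, hqim, hrim]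
  obtain ⟨c, hc, hcq⟩ := posdef_quadratic_lower hd _ hpos
  have hRIlow : ∀ n, c * S n ≤ RI n := by
    intro n
    have h := hcq (Y n)
    simpa [dotProduct, Matrix.mulVec, hSdef, hRIdef] using h
  obtain ⟨W, hWdef⟩ : ∃ W : ℝ, W = Real.sqrt (∑ j, (w j).im ^ 2) := ⟨_, rfl⟩
  have hW0 : 0 ≤ W := hWdef ▸ Real.sqrt_nonneg _
  have hQIbound : ∀ n, |QI n| ≤ W * Real.sqrt (S n) := by
    intro n
    have hcs := Finset.sum_mul_sq_le_sq_mul_sq Finset.univ (fun j => (w j).im) (Y n)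
    have h1 : |QI n| = Real.sqrt (QI n ^ 2) := (Real.sqrt_sq_eq_abs _).symm
    have h2 : W * Real.sqrt (S n) = Real.sqrt ((∑ j, (w j).im ^ 2) * S n) := by
      rw [hWdef, ← Real.sqrt_mul (Finset.sum_nonneg fun j _ => sq_nonneg _)]
    rw [h1, h2]
    apply Real.sqrt_le_sqrt
    simp only [hQIdef, hSdef]
    exact hcs
  have am_gm : ∀ u v : ℝ, 2 * u * (W * v) ≤ 2 * (W ^ 2 / c) * u ^ 2 + c / 2 * v ^ 2 := by
    intro u v
    have h := sq_nonneg (2 * W * u - c * v)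
    have h3 : 2 * (W ^ 2 / c) * u ^ 2 + c / 2 * v ^ 2 - 2 * u * (W * v)
        = (2 * W * u - c * v) ^ 2 / (2 * c) := by
      field_simp
      ring
    nlinarith [div_nonneg h (by linarith : (0:ℝ) ≤ 2 * c)]
  have hkey2 : ∀ t : ℝ, 2 * W ^ 2 / c + 1 ≤ t → ∀ n,
      X n ^ 2 + c / 2 * S n ≤ t * X n ^ 2 + 2 * X n * QI n + RI n := by
    intro t ht n
    have hS0 : 0 ≤ S n := by
      rw [hSdef]
      exact Finset.sum_nonneg fun j _ => sq_nonneg _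
    have hA2 : |X n| ^ 2 = X n ^ 2 := sq_abs _
    have hB2 : Real.sqrt (S n) ^ 2 = S n := Real.sq_sqrt hS0
    have hXQ : -(2 * |X n| * (W * Real.sqrt (S n))) ≤ 2 * X n * QI n := by
      have h1 : |2 * X n * QI n| ≤ 2 * |X n| * (W * Real.sqrt (S n)) := by
        rw [abs_mul, abs_mul]
        simp only [abs_two]
        gcongr
        exact hQIbound n
      linarith [neg_abs_le (2 * X n * QI n)]
    have hAM := am_gm |X n| (Real.sqrt (S n))
    rw [hA2, hB2] at hAM
    have htX : (2 * W ^ 2 / c + 1) * X n ^ 2 ≤ t * X n ^ 2 :=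
      mul_le_mul_of_nonneg_right ht (sq_nonneg _)
    have hRIl := hRIlow n
    have hexpand : (2 * W ^ 2 / c + 1) * X n ^ 2
        = 2 * (W ^ 2 / c) * X n ^ 2 + X n ^ 2 := by ring
    rw [hexpand] at htX
    linarith
  obtain ⟨bound, hbounddef⟩ : ∃ f : ((Fin 1 ⊕ Fin (g - 1)) → ℤ) → ℝ,
      f = fun n => Real.exp (-(Real.pi * m * (X n ^ 2 + c / 2 * S n))) := ⟨_, rfl⟩
  have hboundsum : Summable bound := by
    have hbeq : ∀ n : (Fin 1 ⊕ Fin (g - 1)) → ℤ, bound n =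
        (∏ i : Fin 1, Real.exp (-(Real.pi * m * ((n (Sum.inl i) : ℝ) + ε₁) ^ 2))) *
        (∏ j, Real.exp (-(Real.pi * m * (c / 2) * ((n (Sum.inr j) : ℝ) + ε₂ j) ^ 2))) := by
      intro n
      simp only [hbounddef, Fin.prod_univ_one]
      rw [← Real.exp_sum, ← Real.exp_add]
      congr 1
      have hsum : ∑ j, -(Real.pi * m * (c / 2) * ((n (Sum.inr j) : ℝ) + ε₂ j) ^ 2)
          = -(Real.pi * m * (c / 2) * S n) := by
        rw [Finset.sum_neg_distrib, ← Finset.mul_sum]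
        simp only [hSdef, hYdef]
      rw [hsum]
      simp only [hXdef]
      ring
    have hs₁ : Summable (fun u : Fin 1 → ℤ =>
        ∏ i : Fin 1, Real.exp (-(Real.pi * m * ((u i : ℝ) + ε₁) ^ 2))) :=
      summable_pi_prod 1 (fun _ k => Real.exp (-(Real.pi * m * ((k : ℝ) + ε₁) ^ 2)))
        (fun _ k => (Real.exp_pos _).le)
        (fun _ => summable_exp_int _ _ hπm hε₁0 hε₁1)
    have hs₂ : Summable (fun v : Fin (g-1) → ℤ =>
        ∏ j, Real.exp (-(Real.pi * m * (c / 2) * ((v j : ℝ) + ε₂ j) ^ 2))) :=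
      summable_pi_prod (g-1)
        (fun j k => Real.exp (-(Real.pi * m * (c / 2) * ((k : ℝ) + ε₂ j) ^ 2)))
        (fun _ k => (Real.exp_pos _).le)
        (fun j => summable_exp_int _ _ (by positivity) (hε₂0 j) (hε₂1 j))
    have H : Summable (fun p : (Fin 1 → ℤ) × (Fin (g-1) → ℤ) =>
        (fun u : Fin 1 → ℤ =>
          ∏ i : Fin 1, Real.exp (-(Real.pi * m * ((u i : ℝ) + ε₁) ^ 2))) p.1 *
        (fun v : Fin (g-1) → ℤ =>
          ∏ j, Real.exp (-(Real.pi * m * (c / 2) * ((v j : ℝ) + ε₂ j) ^ 2))) p.2) :=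
      Summable.mul_of_nonneg
        (f := fun u : Fin 1 → ℤ =>
          ∏ i : Fin 1, Real.exp (-(Real.pi * m * ((u i : ℝ) + ε₁) ^ 2)))
        (g := fun v : Fin (g-1) → ℤ =>
          ∏ j, Real.exp (-(Real.pi * m * (c / 2) * ((v j : ℝ) + ε₂ j) ^ 2)))
        hs₁ hs₂
        (fun u => Finset.prod_nonneg fun _ _ => (Real.exp_pos _).le)
        (fun v => Finset.prod_nonneg fun _ _ => (Real.exp_pos _).le)
    have H2 := ((Equiv.sumArrowEquivProdArrow (Fin 1) (Fin (g-1)) ℤ).summable_iff).2 H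
    apply H2.congr
    intro n
    rw [Function.comp_apply, hbeq n]
    simp only [Equiv.sumArrowEquivProdArrow_apply_fst,
      Equiv.sumArrowEquivProdArrow_apply_snd]
  obtain ⟨L, hLdef⟩ : ∃ f : ((Fin 1 ⊕ Fin (g - 1)) → ℤ) → ℂ,
      f = fun n => if X n = 0 then
        Complex.exp ((((Real.pi * m : ℝ)) : ℂ) * Complex.I * r n) else 0 := ⟨_, rfl⟩
  have hab : ∀ n, Filter.Tendsto (fun t => F t n) Filter.atTop (nhds (L n)) := by
    intro n
    by_cases hx : X n = 0
    · have hconst : ∀ t : ℝ, F t n = L n := by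
        intro t
        rw [hF t n]
        simp only [hLdef, hx, if_pos]
        push_cast
        congr 1
        ring
      rw [show (fun t : ℝ => F t n) = fun _ => L n from funext hconst]
      exact tendsto_const_nhds
    · have hXpos : 0 < X n ^ 2 := by
        have h1 := sq_abs (X n)
        have h2 := abs_pos.2 hx
        nlinarith
      simp only [hLdef, hx, if_false]
      rw [tendsto_zero_iff_norm_tendsto_zero]
      rw [show (fun t => ‖F t n‖) =
          fun t => Real.exp (-(Real.pi * m * (t * X n ^ 2 + 2 * X n * QI n + RI n))) from
        funext fun t => hnormF t n]
      apply Real.tendsto_exp_atBot.comp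
      apply Filter.tendsto_neg_atTop_atBot.comp
      apply Filter.Tendsto.const_mul_atTop hπm
      apply Filter.tendsto_atTop_add_const_right
      apply Filter.tendsto_atTop_add_const_right
      exact Filter.Tendsto.atTop_mul_const hXpos Filter.tendsto_id
  have h_bound : ∀ᶠ t in Filter.atTop, ∀ n, ‖F t n‖ ≤ bound n := by
    filter_upwards [Filter.eventually_ge_atTop (2 * W ^ 2 / c + 1)] with t ht n
    rw [hnormF t n]
    simp only [hbounddef]
    apply Real.exp_le_exp.2
    have h := mul_le_mul_of_nonneg_left (hkey2 t ht n) hπm.le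
    linarith
  have main := tendsto_tsum_of_dominated_convergence hboundsum hab h_bound
  have hXzero : ∀ n : (Fin 1 ⊕ Fin (g - 1)) → ℤ, X n = 0 → n (Sum.inl 0) = 0 ∧ ε₁ = 0 := by
    intro n hx
    simp only [hXdef] at hx
    have h1 : (-1 : ℝ) < (n (Sum.inl 0) : ℝ) := by linarith
    have h2 : ((n (Sum.inl 0)) : ℝ) ≤ 0 := by linarith
    have h3 : (-1 : ℤ) < n (Sum.inl 0) := by exact_mod_cast h1
    have h4 : n (Sum.inl 0) ≤ 0 := by exact_mod_cast h2
    have h5 : n (Sum.inl 0) = 0 := by omega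
    refine ⟨h5, ?_⟩
    rw [h5] at hx
    simpa using hx
  have hgoal : (fun t : ℝ => thetaConst (Fin 1 ⊕ Fin (g - 1)) m (Sum.elim (fun _ => ε₁) ε₂)
      (degenMatrix g τ w t)) = fun t => ∑' n, F t n := by
    funext t
    simp only [thetaConst, hFdef, hεv]
  rw [hgoal]
  obtain ⟨G, hGdef⟩ : ∃ f : (Fin (g-1) → ℤ) → ℂ,
      f = fun v => Complex.exp ((Real.pi : ℂ) * Complex.I * (m : ℂ) *
        ((fun j => (v j : ℂ) + (ε₂ j : ℂ)) ⬝ᵥ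
          τ.mulVec (fun j => (v j : ℂ) + (ε₂ j : ℂ)))) := ⟨_, rfl⟩
  have hthc : thetaConst (Fin (g - 1)) m ε₂ τ = ∑' v, G v := by
    simp only [thetaConst, hGdef]
  by_cases hε : ε₁ = 0
  · rw [if_pos hε, hthc]
    have htheta : (∑' n, L n) = ∑' v, G v := by
      apply tsum_eq_tsum_of_ne_zero_bij
        (i := fun v : ↑(Function.support G) =>
          Sum.elim (fun _ : Fin 1 => (0 : ℤ)) (v : Fin (g-1) → ℤ))
      · intro x y hxy
        apply Subtype.ext
        funext j
        exact congrFun (congrArg (fun f => f ∘ Sum.inr) hxy) j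
      · intro n hn
        have hn' : L n ≠ 0 := hn
        have hx : X n = 0 := by
          by_contra hx
          apply hn'
          simp only [hLdef]
          exact if_neg hx
        obtain ⟨h5, -⟩ := hXzero n hx
        have hGne : G (n ∘ Sum.inr) ≠ 0 := by
          simp only [hGdef]
          exact Complex.exp_ne_zero _
        refine ⟨⟨n ∘ Sum.inr, hGne⟩, ?_⟩
        funext i
        cases i with
        | inl a =>
          have ha : a = 0 := Subsingleton.elim a 0
          subst ha
          exact h5.symm
        | inr j => rfl
      · intro x
        have hX0 : X (Sum.elim (fun _ : Fin 1 => (0 : ℤ)) (x : Fin (g-1) → ℤ)) = 0 := by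
          simp only [hXdef, Sum.elim_inl]
          simp [hε]
        show L (Sum.elim (fun _ : Fin 1 => (0 : ℤ)) (x : Fin (g-1) → ℤ)) = G (x : Fin (g-1) → ℤ)
        have hL : L (Sum.elim (fun _ : Fin 1 => (0 : ℤ)) (x : Fin (g-1) → ℤ))
            = Complex.exp ((((Real.pi * m : ℝ)) : ℂ) * Complex.I *
                r (Sum.elim (fun _ : Fin 1 => (0 : ℤ)) (x : Fin (g-1) → ℤ))) := by
          simp only [hLdef]
          rw [if_pos hX0]
        have hGx : G (x : Fin (g-1) → ℤ) = Complex.exp ((((Real.pi * m : ℝ)) : ℂ) * Complex.I *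
            ((fun j => (((x : Fin (g-1) → ℤ) j : ℤ) : ℂ) + (ε₂ j : ℂ)) ⬝ᵥ
              τ.mulVec (fun j => (((x : Fin (g-1) → ℤ) j : ℤ) : ℂ) + (ε₂ j : ℂ)))) := by
          simp only [hGdef]
          rw [hpre]
        rw [hL, hGx]
        congr 1
        congr 1
        simp only [hrdef, hYdef, dotProduct, Matrix.mulVec, Sum.elim_inr]
        push_cast
        rfl
    rwa [htheta] at main
  · rw [if_neg hε]
    have hLzero : ∀ n, L n = 0 := by
      intro n
      simp only [hLdef]
      rw [if_neg]
      intro hx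
      exact hε (hXzero n hx).2
    have hz : (∑' n, L n) = 0 := by
      rw [show L = fun _ => (0:ℂ) from funext hLzero]
      exact tsum_zero
    rwa [hz] at main
end

section
/- For every γ = (A B; C D) ∈ Sp(2g,ℝ) and every τ ∈ H_g, the map f_γ : σ ↦ (Aσ+B)(Cσ+D)⁻¹, defined on the open set of g×g complex matrices σ for which Cσ+D is invertible, is complex (Fréchet) differentiable at τ, with derivative the linear map X ↦ ((Cτ+D)ᵀ)⁻¹ · X · (Cτ+D)⁻¹ on the space of g×g complex matrices. -/
open scoped Matrix Topology
open Matrix Filter Asymptotics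

attribute [local instance] Matrix.normedAddCommGroup Matrix.normedSpace

/-- The standard symplectic form `J = (0 1; −1 0)` in `g × g` blocks, over `ℝ`. -/
def Jmat (g : ℕ) : Matrix (Fin g ⊕ Fin g) (Fin g ⊕ Fin g) ℝ :=
  Matrix.fromBlocks 0 1 (-1) 0

/-- The linear map `X ↦ P * X * Q` on `g × g` complex matrices. -/
noncomputable def mulLeftRight (g : ℕ) (P Q : Matrix (Fin g) (Fin g) ℂ) :
    Matrix (Fin g) (Fin g) ℂ →ₗ[ℂ] Matrix (Fin g) (Fin g) ℂ where
  toFun X := P * X * Q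
  map_add' X Y := by simp only [Matrix.mul_add, Matrix.add_mul]
  map_smul' c X := by simp [Matrix.mul_smul, Matrix.smul_mul]

/-- Matrix multiplication as a continuous bilinear map. -/
noncomputable def mulCLM (g : ℕ) :
    Matrix (Fin g) (Fin g) ℂ →L[ℂ] Matrix (Fin g) (Fin g) ℂ →L[ℂ] Matrix (Fin g) (Fin g) ℂ :=
  LinearMap.toContinuousLinearMap
    ((LinearMap.toContinuousLinearMap :
        (Matrix (Fin g) (Fin g) ℂ →ₗ[ℂ] Matrix (Fin g) (Fin g) ℂ) ≃ₗ[ℂ] _).toLinearMap ∘ₗ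
      LinearMap.mul ℂ (Matrix (Fin g) (Fin g) ℂ))

@[simp] lemma mulCLM_apply (g : ℕ) (P Q : Matrix (Fin g) (Fin g) ℂ) :
    mulCLM g P Q = P * Q := rfl

/-- `P ↦ (X ↦ P * X * R)` as a linear map. -/
noncomputable def rightMulPair (g : ℕ) (R : Matrix (Fin g) (Fin g) ℂ) :
    Matrix (Fin g) (Fin g) ℂ →ₗ[ℂ] (Matrix (Fin g) (Fin g) ℂ →L[ℂ] Matrix (Fin g) (Fin g) ℂ) where
  toFun P := LinearMap.toContinuousLinearMap (mulLeftRight g P R)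
  map_add' P P' := by
    ext X
    simp [mulLeftRight, Matrix.add_mul]
  map_smul' c P := by
    ext X
    simp [mulLeftRight, Matrix.smul_mul]

noncomputable instance matCLMNormed (g : ℕ) :
    NormedAddCommGroup (Matrix (Fin g) (Fin g) ℂ →L[ℂ] Matrix (Fin g) (Fin g) ℂ) :=
  @ContinuousLinearMap.toNormedAddCommGroup _ _ _ _ _ _ _ _ _ _ _ _

theorem hasFDerivAt_matrix_inv (g : ℕ) (x : Matrix (Fin g) (Fin g) ℂ) (hx : IsUnit x.det) :
    HasFDerivAt (fun σ : Matrix (Fin g) (Fin g) ℂ => σ⁻¹)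
      (-(LinearMap.toContinuousLinearMap (mulLeftRight g x⁻¹ x⁻¹))) x := by
  have hdetne : x.det ≠ 0 := hx.ne_zero
  have hcont : ContinuousAt (fun σ : Matrix (Fin g) (Fin g) ℂ => σ⁻¹) x := by
    apply continuousAt_matrix_inv
    rw [Ring.inverse_eq_inv']
    exact continuousAt_inv₀ hdetne
  have hev : ∀ᶠ σ : Matrix (Fin g) (Fin g) ℂ in 𝓝 x, IsUnit σ.det := by
    have hopen : IsOpen {σ : Matrix (Fin g) (Fin g) ℂ | σ.det ≠ 0} :=
      isOpen_compl_singleton.preimage (Continuous.matrix_det continuous_id)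
    filter_upwards [hopen.mem_nhds hdetne] with σ hσ
    exact isUnit_iff_ne_zero.mpr hσ
  refine hasFDerivAt_iff_isLittleO.mpr ?_
  have hΨ : Tendsto (fun σ : Matrix (Fin g) (Fin g) ℂ =>
      (rightMulPair g x⁻¹) (x⁻¹ - σ⁻¹)) (𝓝 x) (𝓝 0) := by
    have h0 : Tendsto (fun σ : Matrix (Fin g) (Fin g) ℂ => x⁻¹ - σ⁻¹) (𝓝 x) (𝓝 0) := by
      have h := ((continuousAt_const (y := x⁻¹)).sub hcont).tendsto
      rw [Pi.sub_apply, sub_self] at h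
      exact h
    have hc : Continuous (rightMulPair g x⁻¹) :=
      (rightMulPair g x⁻¹).continuous_of_finiteDimensional
    have h := (hc.continuousAt (x := (0 : Matrix (Fin g) (Fin g) ℂ))).tendsto.comp h0
    rw [map_zero] at h
    exact h
  have hlo : (fun σ : Matrix (Fin g) (Fin g) ℂ =>
      ((rightMulPair g x⁻¹) (x⁻¹ - σ⁻¹)) (σ - x)) =o[𝓝 x] fun σ => σ - x := by
    rw [isLittleO_iff]
    intro c hc
    have h : ∀ᶠ σ : Matrix (Fin g) (Fin g) ℂ in 𝓝 x,
        ‖(rightMulPair g x⁻¹) (x⁻¹ - σ⁻¹)‖ < c := by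
      have h := hΨ.norm
      rw [norm_zero] at h
      exact h.eventually_lt_const hc
    filter_upwards [h] with σ hσ
    calc ‖((rightMulPair g x⁻¹) (x⁻¹ - σ⁻¹)) (σ - x)‖
        ≤ ‖(rightMulPair g x⁻¹) (x⁻¹ - σ⁻¹)‖ * ‖σ - x‖ :=
          ContinuousLinearMap.le_opNorm _ _
      _ ≤ c * ‖σ - x‖ := mul_le_mul_of_nonneg_right hσ.le (norm_nonneg _)
  refine hlo.congr' ?_ EventuallyEq.rfl
  filter_upwards [hev] with σ hσ
  have e1 : σ⁻¹ * σ = 1 := Matrix.nonsing_inv_mul σ hσ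
  have e2 : x * x⁻¹ = 1 := Matrix.mul_nonsing_inv x hx
  show (x⁻¹ - σ⁻¹) * (σ - x) * x⁻¹ = σ⁻¹ - x⁻¹ - -(x⁻¹ * (σ - x) * x⁻¹)
  have hL : (x⁻¹ - σ⁻¹) * (σ - x) * x⁻¹
      = x⁻¹ * σ * x⁻¹ - x⁻¹ * (x * x⁻¹) - σ⁻¹ * σ * x⁻¹ + σ⁻¹ * (x * x⁻¹) := by
    noncomm_ring
  have hR : σ⁻¹ - x⁻¹ - -(x⁻¹ * (σ - x) * x⁻¹)
      = σ⁻¹ - x⁻¹ + (x⁻¹ * σ * x⁻¹ - x⁻¹ * (x * x⁻¹)) := by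
    noncomm_ring
  rw [hL, hR, e1, e2]
  noncomm_ring

theorem symplectic_relations (g : ℕ) (A B C D : Matrix (Fin g) (Fin g) ℝ)
    (hγ : Matrix.fromBlocks A B C D * Jmat g * (Matrix.fromBlocks A B C D)ᵀ = Jmat g) :
    Aᵀ * C = Cᵀ * A ∧ Aᵀ * D - Cᵀ * B = 1 ∧ Bᵀ * D = Dᵀ * B := by
  set P := Matrix.fromBlocks A B C D with hP
  have hJJ : Jmat g * Jmat g = -1 := by
    have h1 : (-1 : Matrix (Fin g ⊕ Fin g) (Fin g ⊕ Fin g) ℝ)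
        = Matrix.fromBlocks (-1) 0 0 (-1) := by
      ext i j
      rcases i with i | i <;> rcases j with j | j <;>
        simp [Matrix.fromBlocks, Matrix.one_apply, Sum.inl.injEq, Sum.inr.injEq]
    rw [h1, Jmat, Matrix.fromBlocks_multiply]
    congr 1 <;> simp
  have hP1 : P * (Jmat g * Pᵀ * -(Jmat g)) = 1 := by
    have h : P * (Jmat g * Pᵀ * -(Jmat g)) = (P * Jmat g * Pᵀ) * -(Jmat g) := by noncomm_ring
    rw [h, hγ, mul_neg, hJJ]
    simp
  have hP2 : (Jmat g * Pᵀ * -(Jmat g)) * P = 1 := mul_eq_one_comm.mp hP1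
  have h3 : Pᵀ * Jmat g * P = Jmat g := by
    have h4 : (-(Jmat g)) * ((Jmat g * Pᵀ * -(Jmat g)) * P) = -(Jmat g) := by
      rw [hP2, mul_one]
    have h5 : (-(Jmat g)) * ((Jmat g * Pᵀ * -(Jmat g)) * P)
        = (Jmat g * Jmat g) * (Pᵀ * Jmat g * P) := by noncomm_ring
    rw [h5, hJJ] at h4
    simpa using h4
  have h6 : Matrix.fromBlocks (-(Cᵀ * A) + Aᵀ * C) (-(Cᵀ * B) + Aᵀ * D)
      (-(Dᵀ * A) + Bᵀ * C) (-(Dᵀ * B) + Bᵀ * D) = Matrix.fromBlocks 0 1 (-1) 0 := by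
    rw [show (Matrix.fromBlocks 0 1 (-1) 0 : Matrix (Fin g ⊕ Fin g) (Fin g ⊕ Fin g) ℝ)
        = Jmat g from rfl, ← h3, hP, Matrix.fromBlocks_transpose, Jmat,
      Matrix.fromBlocks_multiply, Matrix.fromBlocks_multiply]
    congr 1 <;> noncomm_ring
  have e11 := congrArg Matrix.toBlocks₁₁ h6
  have e12 := congrArg Matrix.toBlocks₁₂ h6
  have e22 := congrArg Matrix.toBlocks₂₂ h6
  simp only [Matrix.toBlocks_fromBlocks₁₁, Matrix.toBlocks_fromBlocks₁₂,
    Matrix.toBlocks_fromBlocks₂₂] at e11 e12 e22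
  refine ⟨?_, ?_, ?_⟩
  · linear_combination (norm := noncomm_ring) e11
  · linear_combination (norm := noncomm_ring) e12
  · linear_combination (norm := noncomm_ring) e22

/-- For `γ = (A B; C D) ∈ Sp(2g,ℝ)` and `τ ∈ H_g`, the map
`f_γ : σ ↦ (Aσ+B)(Cσ+D)⁻¹` is complex differentiable at `τ`, with derivative the
linear map `X ↦ ((Cτ+D)ᵀ)⁻¹ X (Cτ+D)⁻¹`. -/
theorem hasFDerivAt_symplectic_action (g : ℕ)
    (A B C D : Matrix (Fin g) (Fin g) ℝ)
    (hγ : Matrix.fromBlocks A B C D * Jmat g * (Matrix.fromBlocks A B C D)ᵀ = Jmat g)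
    (τ : Matrix (Fin g) (Fin g) ℂ) (hsym : τ.IsSymm)
    (hpos : (Matrix.of fun i j => (τ i j).im).PosDef) :
    HasFDerivAt
      (fun σ : Matrix (Fin g) (Fin g) ℂ =>
        (A.map (fun x : ℝ => (x : ℂ)) * σ + B.map (fun x : ℝ => (x : ℂ))) *
          (C.map (fun x : ℝ => (x : ℂ)) * σ + D.map (fun x : ℝ => (x : ℂ)))⁻¹)
      (LinearMap.toContinuousLinearMap
        (mulLeftRight g
          (((C.map (fun x : ℝ => (x : ℂ)) * τ + D.map (fun x : ℝ => (x : ℂ)))ᵀ)⁻¹)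
          ((C.map (fun x : ℝ => (x : ℂ)) * τ + D.map (fun x : ℝ => (x : ℂ)))⁻¹)))
      τ := by
  obtain ⟨r1, r2, r3⟩ := symplectic_relations g A B C D hγ
  set A' := A.map (fun x : ℝ => (x : ℂ)) with hA'
  set B' := B.map (fun x : ℝ => (x : ℂ)) with hB'
  set C' := C.map (fun x : ℝ => (x : ℂ)) with hC'
  set D' := D.map (fun x : ℝ => (x : ℂ)) with hD'
  -- complexified relations
  have hmapmul : ∀ X Y : Matrix (Fin g) (Fin g) ℝ,
      (X * Y).map (fun x : ℝ => (x : ℂ)) =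
        X.map (fun x : ℝ => (x : ℂ)) * Y.map (fun x : ℝ => (x : ℂ)) := fun X Y =>
    Matrix.map_mul (f := Complex.ofRealHom)
  have hmapT : ∀ X : Matrix (Fin g) (Fin g) ℝ,
      (Xᵀ).map (fun x : ℝ => (x : ℂ)) = (X.map (fun x : ℝ => (x : ℂ)))ᵀ := fun X =>
    rfl
  have r1' : A'ᵀ * C' = C'ᵀ * A' := by
    have h : (Aᵀ * C).map (fun x : ℝ => (x : ℂ)) = (Cᵀ * A).map (fun x : ℝ => (x : ℂ)) := by
      rw [r1]
    simpa only [hmapmul, hmapT] using h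
  have r2' : A'ᵀ * D' - C'ᵀ * B' = 1 := by
    have h : (Aᵀ * D - Cᵀ * B).map (fun x : ℝ => (x : ℂ))
        = (1 : Matrix (Fin g) (Fin g) ℝ).map (fun x : ℝ => (x : ℂ)) := by
      rw [r2]
    rw [Matrix.map_sub (fun x : ℝ => (x : ℂ)) (fun a b => Complex.ofReal_sub a b),
      hmapmul, hmapmul, hmapT, hmapT,
      Matrix.map_one _ Complex.ofReal_zero Complex.ofReal_one] at h
    exact h
  have r3' : B'ᵀ * D' = D'ᵀ * B' := by
    have h : (Bᵀ * D).map (fun x : ℝ => (x : ℂ)) = (Dᵀ * B).map (fun x : ℝ => (x : ℂ)) := by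
      rw [r3]
    simpa only [hmapmul, hmapT] using h
  have r2t' : D'ᵀ * A' - B'ᵀ * C' = 1 := by
    have h := congrArg Matrix.transpose r2'
    rw [Matrix.transpose_sub, Matrix.transpose_mul, Matrix.transpose_mul,
      Matrix.transpose_transpose, Matrix.transpose_transpose, Matrix.transpose_one] at h
    exact h
  set M := C' * τ + D' with hM
  set N := A' * τ + B' with hN
  have hτT : τᵀ = τ := hsym
  have hMT : Mᵀ = τ * C'ᵀ + D'ᵀ := by
    rw [hM, Matrix.transpose_add, Matrix.transpose_mul, hτT]
  have hNT : Nᵀ = τ * A'ᵀ + B'ᵀ := by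
    rw [hN, Matrix.transpose_add, Matrix.transpose_mul, hτT]
  -- symmetric identity
  have idSym : Nᵀ * M = Mᵀ * N := by
    have hexp : Nᵀ * M - Mᵀ * N
        = τ * (A'ᵀ * C' - C'ᵀ * A') * τ + τ * (A'ᵀ * D' - C'ᵀ * B')
          + (B'ᵀ * C' - D'ᵀ * A') * τ + (B'ᵀ * D' - D'ᵀ * B') := by
      rw [hMT, hNT, hM, hN]
      noncomm_ring
    have hz1 : A'ᵀ * C' - C'ᵀ * A' = 0 := sub_eq_zero.mpr r1'
    have hz3 : B'ᵀ * D' - D'ᵀ * B' = 0 := sub_eq_zero.mpr r3'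
    have hz2' : B'ᵀ * C' - D'ᵀ * A' = -1 := by
      rw [← neg_sub]
      rw [r2t']
    rw [hz1, hz3, r2', hz2'] at hexp
    have : Nᵀ * M - Mᵀ * N = 0 := by
      rw [hexp]
      noncomm_ring
    exact sub_eq_zero.mp this
  -- the identity `Mᵀ A' - Nᵀ C' = 1`
  have idOne : Mᵀ * A' - Nᵀ * C' = 1 := by
    have hexp : Mᵀ * A' - Nᵀ * C'
        = τ * (C'ᵀ * A' - A'ᵀ * C') + (D'ᵀ * A' - B'ᵀ * C') := by
      rw [hMT, hNT]
      noncomm_ring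
    have hz1' : C'ᵀ * A' - A'ᵀ * C' = 0 := sub_eq_zero.mpr r1'.symm
    rw [hz1', r2t'] at hexp
    rw [hexp]
    noncomm_ring
  -- conjugate transposes of real matrices
  have hCH : C'ᴴ = C'ᵀ := by
    rw [hC']
    ext i j
    simp only [Matrix.conjTranspose_apply, Matrix.transpose_apply, Matrix.map_apply,
      RCLike.star_def, Complex.conj_ofReal]
  have hDH : D'ᴴ = D'ᵀ := by
    rw [hD']
    ext i j
    simp only [Matrix.conjTranspose_apply, Matrix.transpose_apply, Matrix.map_apply,
      RCLike.star_def, Complex.conj_ofReal]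
  have hAH : A'ᴴ = A'ᵀ := by
    rw [hA']
    ext i j
    simp only [Matrix.conjTranspose_apply, Matrix.transpose_apply, Matrix.map_apply,
      RCLike.star_def, Complex.conj_ofReal]
  have hBH : B'ᴴ = B'ᵀ := by
    rw [hB']
    ext i j
    simp only [Matrix.conjTranspose_apply, Matrix.transpose_apply, Matrix.map_apply,
      RCLike.star_def, Complex.conj_ofReal]
  -- hermitian identity
  have idHerm : Mᴴ * N - Nᴴ * M = τ - τᴴ := by
    have hMH : Mᴴ = τᴴ * C'ᵀ + D'ᵀ := by
      rw [hM, Matrix.conjTranspose_add, Matrix.conjTranspose_mul, hCH, hDH]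
    have hNH : Nᴴ = τᴴ * A'ᵀ + B'ᵀ := by
      rw [hN, Matrix.conjTranspose_add, Matrix.conjTranspose_mul, hAH, hBH]
    have hexp : Mᴴ * N - Nᴴ * M
        = τᴴ * (C'ᵀ * A' - A'ᵀ * C') * τ + τᴴ * (C'ᵀ * B' - A'ᵀ * D')
          + (D'ᵀ * A' - B'ᵀ * C') * τ + (D'ᵀ * B' - B'ᵀ * D') := by
      rw [hMH, hNH, hM, hN]
      noncomm_ring
    have hz1' : C'ᵀ * A' - A'ᵀ * C' = 0 := sub_eq_zero.mpr r1'.symm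
    have hz2 : C'ᵀ * B' - A'ᵀ * D' = -1 := by
      rw [← neg_sub, r2']
    have hz3' : D'ᵀ * B' - B'ᵀ * D' = 0 := sub_eq_zero.mpr r3'.symm
    rw [hz1', hz2, r2t', hz3'] at hexp
    rw [hexp]
    noncomm_ring
  -- invertibility of M
  have hdet : IsUnit M.det := by
    rw [isUnit_iff_ne_zero]
    intro hdet0
    obtain ⟨v, hv0, hMv⟩ := Matrix.exists_mulVec_eq_zero_iff.mpr hdet0
    -- the quadratic form vanishes
    have hq : star v ⬝ᵥ ((Mᴴ * N - Nᴴ * M) *ᵥ v) = 0 := by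
      rw [Matrix.sub_mulVec, ← Matrix.mulVec_mulVec, ← Matrix.mulVec_mulVec, hMv,
        Matrix.mulVec_zero, dotProduct_sub, dotProduct_zero,
        Matrix.dotProduct_mulVec, ← Matrix.star_mulVec, hMv, star_zero,
        zero_dotProduct, sub_zero]
    rw [idHerm] at hq
    -- rewrite `τ - τᴴ` in terms of the imaginary part
    set S := (Matrix.of fun i j => (τ i j).im) with hS
    have htt : τ - τᴴ = ((2 : ℂ) * Complex.I) • S.map (fun x : ℝ => (x : ℂ)) := by
      ext i j
      have hji : τ j i = τ i j := by
        conv_lhs => rw [show τ j i = τᵀ i j from rfl, hτT]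
      simp only [Matrix.sub_apply, Matrix.conjTranspose_apply, Matrix.smul_apply,
        Matrix.map_apply, Matrix.of_apply, hji, smul_eq_mul, RCLike.star_def, hS]
      rw [Complex.sub_conj]
      push_cast
      ring
    rw [htt, Matrix.smul_mulVec, dotProduct_smul, smul_eq_mul,
      mul_eq_zero] at hq
    have h2I : (2 : ℂ) * Complex.I ≠ 0 := by
      simp [Complex.I_ne_zero]
    have hq0 : star v ⬝ᵥ (S.map (fun x : ℝ => (x : ℂ)) *ᵥ v) = 0 := hq.resolve_left h2I
    -- real and imaginary parts of v
    set a := fun i => (v i).re with ha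
    set b := fun i => (v i).im with hb
    have hre : (star v ⬝ᵥ (S.map (fun x : ℝ => (x : ℂ)) *ᵥ v)).re
        = a ⬝ᵥ (S *ᵥ a) + b ⬝ᵥ (S *ᵥ b) := by
      simp only [dotProduct, Matrix.mulVec, dotProduct, Matrix.map_apply,
        Pi.star_apply, RCLike.star_def]
      rw [Complex.re_sum, ← Finset.sum_add_distrib]
      refine Finset.sum_congr rfl fun i _ => ?_
      rw [Finset.mul_sum, Complex.re_sum, Finset.mul_sum, Finset.mul_sum,
        ← Finset.sum_add_distrib]
      refine Finset.sum_congr rfl fun j _ => ?_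
      simp only [ha, hb, Complex.mul_re, Complex.mul_im, Complex.conj_re, Complex.conj_im,
        Complex.ofReal_re, Complex.ofReal_im]
      ring
    have hab : a ≠ 0 ∨ b ≠ 0 := by
      by_contra h
      push_neg at h
      apply hv0
      funext i
      have h1 := congrFun h.1 i
      have h2 := congrFun h.2 i
      simp only [ha, hb, Pi.zero_apply] at h1 h2
      exact Complex.ext h1 h2
    have hpos' : 0 < a ⬝ᵥ (S *ᵥ a) + b ⬝ᵥ (S *ᵥ b) := by
      have hsa : ∀ x : Fin g → ℝ, x ≠ 0 → 0 < x ⬝ᵥ (S *ᵥ x) := fun x hx => by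
        have := (posDef_iff_dotProduct_mulVec.mp hpos).2 hx
        simpa using this
      have hse : ∀ x : Fin g → ℝ, 0 ≤ x ⬝ᵥ (S *ᵥ x) := fun x => by
        have := (posSemidef_iff_dotProduct_mulVec.mp hpos.posSemidef).2 x
        simpa using this
      rcases hab with h | h
      · exact add_pos_of_pos_of_nonneg (hsa a h) (hse b)
      · exact add_pos_of_nonneg_of_pos (hse a) (hsa b h)
    rw [hq0] at hre
    simp only [Complex.zero_re] at hre
    rw [← hre] at hpos'
    exact lt_irrefl 0 hpos'
  have hdetT : IsUnit (Mᵀ).det := by rwa [Matrix.det_transpose]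
  have hMM : M * M⁻¹ = 1 := Matrix.mul_nonsing_inv M hdet
  -- key formula for the transpose inverse
  have hkey : (Mᵀ)⁻¹ = A' - N * M⁻¹ * C' := by
    apply Matrix.inv_eq_right_inv
    have h1 : Mᵀ * (A' - N * M⁻¹ * C') = Mᵀ * A' - (Mᵀ * N) * M⁻¹ * C' := by
      noncomm_ring
    rw [h1, ← idSym]
    have h2 : Nᵀ * M * M⁻¹ * C' = Nᵀ * (M * M⁻¹) * C' := by noncomm_ring
    rw [h2, hMM]
    have h3 : Mᵀ * A' - Nᵀ * 1 * C' = Mᵀ * A' - Nᵀ * C' := by noncomm_ring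
    rw [h3, idOne]
  -- assemble the derivative
  have hMder : HasFDerivAt (fun σ : Matrix (Fin g) (Fin g) ℂ => C' * σ + D')
      (mulCLM g C') τ := by
    have h := ((mulCLM g C').hasFDerivAt (x := τ)).add_const D'
    exact h
  have hNder : HasFDerivAt (fun σ : Matrix (Fin g) (Fin g) ℂ => A' * σ + B')
      (mulCLM g A') τ := by
    have h := ((mulCLM g A').hasFDerivAt (x := τ)).add_const B'
    exact h
  have hInvComp : HasFDerivAt (fun σ : Matrix (Fin g) (Fin g) ℂ => (C' * σ + D')⁻¹)
      ((-(LinearMap.toContinuousLinearMap (mulLeftRight g M⁻¹ M⁻¹))).comp (mulCLM g C')) τ :=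
    (hasFDerivAt_matrix_inv g M hdet).comp τ hMder
  have hprod := (mulCLM g).hasFDerivAt_of_bilinear hNder hInvComp
  have heq : LinearMap.toContinuousLinearMap (mulLeftRight g ((Mᵀ)⁻¹) (M⁻¹))
      = (mulCLM g).precompR (Matrix (Fin g) (Fin g) ℂ) (A' * τ + B')
          ((-(LinearMap.toContinuousLinearMap (mulLeftRight g M⁻¹ M⁻¹))).comp (mulCLM g C'))
        + (mulCLM g).precompL (Matrix (Fin g) (Fin g) ℂ) (mulCLM g A') ((C' * τ + D')⁻¹) := by
    refine ContinuousLinearMap.ext fun X => ?_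
    show (Mᵀ)⁻¹ * X * M⁻¹ = N * -(M⁻¹ * (C' * X) * M⁻¹) + (A' * X) * M⁻¹
    rw [hkey]
    noncomm_ring
  rw [heq]
  exact hprod
end
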